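/- arXiv:2012.08944 — 4 statements merged into one kernel-verified Lean document; each statement's English description precedes it below -/
import Mathlib

section
/- For all real z and α: Σ_{k=0}^∞ (-1)^k J_{10k+5}(z)·cos((10k+5)α) = (1/10)·Σ_{ℓ=0}^{4} sin(z·cos(α + 2πℓ/5)). -/
open scoped Real

/-- Bessel function of the first kind of integer order `m`,
defined by `J_m(z) = (1/2π) ∫_0^{2π} e^{i z sin θ - i m θ} dθ`. -/
noncomputable def besselJ (m : ℤ) (z : ℂ) : ℂ :=
  (1 / (2 * Real.pi)) * ∫ θ in (0:ℝ)..(2 * Real.pi),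
    Complex.exp (z * Complex.sin (θ:ℂ) * Complex.I - (m:ℂ) * (θ:ℂ) * Complex.I)

section B12aux
set_option maxHeartbeats 1000000

open Complex MeasureTheory intervalIntegral
namespace B12


noncomputable def f (z : ℝ) (θ : ℝ) : ℂ := Complex.exp ((z:ℂ) * Complex.sin (θ:ℂ) * Complex.I)
noncomputable def fd (z : ℝ) (θ : ℝ) : ℂ := (z:ℂ) * Complex.cos (θ:ℂ) * Complex.I * f z θ
noncomputable def fdd (z : ℝ) (θ : ℝ) : ℂ :=
  -(z:ℂ) * Complex.sin (θ:ℂ) * Complex.I * f z θ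
    + (z:ℂ) * Complex.cos (θ:ℂ) * Complex.I * fd z θ

lemma h2pi : (0:ℝ) < 2 * π := by positivity

lemma f_cont (z : ℝ) : Continuous (f z) := by unfold f; fun_prop
lemma fd_cont (z : ℝ) : Continuous (fd z) := by unfold fd f; fun_prop
lemma fdd_cont (z : ℝ) : Continuous (fdd z) := by unfold fdd fd f; fun_prop

lemma f_periodic (z : ℝ) : Function.Periodic (f z) (2 * π) := by
  intro θ; unfold f; push_cast; rw [Complex.sin_add_two_pi]

lemma fd_periodic (z : ℝ) : Function.Periodic (fd z) (2 * π) := by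
  intro θ; unfold fd
  rw [f_periodic]
  push_cast
  rw [Complex.cos_add_two_pi]

lemma f_hasDeriv (z θ : ℝ) : HasDerivAt (f z) (fd z θ) θ := by
  have h1 : HasDerivAt (fun t : ℂ => Complex.exp ((z:ℂ) * Complex.sin t * Complex.I))
      ((z:ℂ) * Complex.cos (θ:ℂ) * Complex.I * Complex.exp ((z:ℂ) * Complex.sin (θ:ℂ) * Complex.I))
      (θ:ℂ) := by
    have h2 : HasDerivAt (fun t : ℂ => (z:ℂ) * Complex.sin t * Complex.I)
        ((z:ℂ) * Complex.cos (θ:ℂ) * Complex.I) (θ:ℂ) := by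
      simpa [mul_comm, mul_assoc] using
        (((Complex.hasDerivAt_sin (θ:ℂ)).const_mul (z:ℂ)).mul_const Complex.I)
    simpa [mul_comm] using h2.cexp
  exact h1.comp_ofReal

lemma fd_hasDeriv (z θ : ℝ) : HasDerivAt (fd z) (fdd z θ) θ := by
  have hu : HasDerivAt (fun t : ℝ => (z:ℂ) * Complex.cos (t:ℂ) * Complex.I)
      (-(z:ℂ) * Complex.sin (θ:ℂ) * Complex.I) θ := by
    have : HasDerivAt (fun t : ℂ => (z:ℂ) * Complex.cos t * Complex.I)
        (-(z:ℂ) * Complex.sin (θ:ℂ) * Complex.I) (θ:ℂ) := by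
      simpa [mul_comm, mul_assoc] using
        (((Complex.hasDerivAt_cos (θ:ℂ)).const_mul (z:ℂ)).mul_const Complex.I)
    exact this.comp_ofReal
  exact hu.mul (f_hasDeriv z θ)

lemma fdd_norm (z θ : ℝ) : ‖fdd z θ‖ ≤ |z| + z ^ 2 := by
  have hf : ‖f z θ‖ = 1 := by
    unfold f
    rw [show (z:ℂ) * Complex.sin (θ:ℂ) * Complex.I = ((z * Real.sin θ : ℝ) : ℂ) * Complex.I by
      push_cast; ring]
    exact Complex.norm_exp_ofReal_mul_I _
  have hsin : Complex.sin (θ:ℂ) = ((Real.sin θ : ℝ) : ℂ) := (Complex.ofReal_sin θ).symm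
  have hcos : Complex.cos (θ:ℂ) = ((Real.cos θ : ℝ) : ℂ) := (Complex.ofReal_cos θ).symm
  unfold fdd fd
  rw [hsin, hcos]
  have h1 : ‖-(z:ℂ) * ((Real.sin θ : ℝ) : ℂ) * Complex.I * f z θ‖ ≤ |z| := by
    simp only [norm_mul, norm_neg, Complex.norm_real, Complex.norm_I, Real.norm_eq_abs,
      mul_one, hf]
    calc |z| * |Real.sin θ| ≤ |z| * 1 := by
          gcongr; exact Real.abs_sin_le_one θ
      _ = |z| := mul_one _
  have h2 : ‖(z:ℂ) * ((Real.cos θ : ℝ) : ℂ) * Complex.I *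
      ((z:ℂ) * ((Real.cos θ : ℝ) : ℂ) * Complex.I * f z θ)‖ ≤ z ^ 2 := by
    simp only [norm_mul, Complex.norm_real, Complex.norm_I, Real.norm_eq_abs, mul_one, hf]
    calc |z| * |Real.cos θ| * (|z| * |Real.cos θ|) ≤ |z| * 1 * (|z| * 1) := by
          gcongr <;> exact Real.abs_cos_le_one θ
      _ = z ^ 2 := by simp [sq]
  calc ‖_ + _‖ ≤ _ + _ := norm_add_le _ _
    _ ≤ |z| + z ^ 2 := add_le_add h1 h2



lemma fourier_eq (n : ℤ) (x : ℝ) :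
    (fourier (-n) (x : AddCircle (2 * π)) : ℂ) = Complex.exp (-(n:ℂ) * (x:ℂ) * Complex.I) := by
  rw [fourier_coe_apply]
  congr 1
  have : (2 * (π:ℂ)) ≠ 0 := by
    simp [Real.pi_ne_zero, Complex.ofReal_ne_zero]
  push_cast
  field_simp

lemma integrand_eq (z : ℝ) (n : ℤ) (x : ℝ) :
    (fourier (-n) (x : AddCircle (2 * π)) : ℂ) • f z x
      = Complex.exp ((z:ℂ) * Complex.sin (x:ℂ) * Complex.I - (n:ℂ) * (x:ℂ) * Complex.I) := by
  rw [smul_eq_mul, fourier_eq, f, ← Complex.exp_add]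
  ring_nf

lemma besselJ_eq_fourierCoeffOn (z : ℝ) (n : ℤ) :
    besselJ n z = fourierCoeffOn h2pi (f z) n := by
  have : (∫ x in (0:ℝ)..(2*π),
      Complex.exp ((z:ℂ) * Complex.sin (x:ℂ) * Complex.I - (n:ℂ) * (x:ℂ) * Complex.I))
      = ∫ x in (0:ℝ)..(2*π), (fourier (-n) (x : AddCircle (2 * π)) : ℂ) • f z x := by
    refine intervalIntegral.integral_congr fun x _ => ?_
    rw [integrand_eq z n x]
  rw [fourierCoeffOn_eq_integral, besselJ, this]
  simp [smul_eq_mul]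



noncomputable def g (z : ℝ) (m : ℤ) (θ : ℝ) : ℂ :=
  Complex.exp ((z:ℂ) * Complex.sin (θ:ℂ) * Complex.I - (m:ℂ) * (θ:ℂ) * Complex.I)

lemma besselJ_def' (z : ℝ) (m : ℤ) :
    besselJ m z = (1 / (2 * π)) * ∫ θ in (0:ℝ)..(2 * π), g z m θ := rfl

lemma g_periodic (z : ℝ) (m : ℤ) : Function.Periodic (g z m) (2 * π) := by
  intro θ; unfold g
  push_cast
  rw [Complex.sin_add_two_pi]
  rw [show (z:ℂ) * Complex.sin (θ:ℂ) * Complex.I - (m:ℂ) * ((θ:ℂ) + 2*(π:ℂ)) * Complex.I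
      = ((z:ℂ) * Complex.sin (θ:ℂ) * Complex.I - (m:ℂ) * (θ:ℂ) * Complex.I)
        + (-m : ℤ) * (2*(π:ℂ)*Complex.I) by push_cast; ring]
  rw [Complex.exp_add, Complex.exp_int_mul_two_pi_mul_I, mul_one]

lemma g_flip (z : ℝ) (m : ℤ) (x : ℝ) :
    g z m (π - x) = Complex.exp (-(m:ℂ) * (π:ℂ) * Complex.I) * g z (-m) x := by
  unfold g
  rw [← Complex.exp_add]
  push_cast
  rw [Complex.sin_pi_sub]
  ring_nf

lemma besselJ_neg (z : ℝ) (m : ℤ) :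
    besselJ (-m) z = Complex.exp ((m:ℂ) * (π:ℂ) * Complex.I) * besselJ m z := by
  have key : (∫ θ in (0:ℝ)..(2*π), g z m θ)
      = Complex.exp (-(m:ℂ) * (π:ℂ) * Complex.I) * ∫ θ in (0:ℝ)..(2*π), g z (-m) θ := by
    have h1 : (∫ x in (-π)..π, g z m (π - x)) = ∫ θ in (π - π)..(π - -π), g z m θ :=
      intervalIntegral.integral_comp_sub_left (g z m) π
    rw [show π - π = (0:ℝ) by ring, show π - -π = 2*π by ring] at h1
    rw [← h1]
    have h2 : (∫ x in (-π)..π, g z m (π - x))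
        = ∫ x in (-π)..π, Complex.exp (-(m:ℂ) * (π:ℂ) * Complex.I) * g z (-m) x :=
      intervalIntegral.integral_congr fun x _ => g_flip z m x
    rw [h2, intervalIntegral.integral_const_mul]
    congr 1
    have h3 := (g_periodic z (-m)).intervalIntegral_add_eq (-π) 0
    rw [show -π + 2*π = π by ring, show (0:ℝ) + 2*π = 2*π by ring] at h3
    exact h3
  have e1 : Complex.exp ((m:ℂ)*(π:ℂ)*Complex.I) * Complex.exp (-(m:ℂ)*(π:ℂ)*Complex.I) = 1 := by
    rw [← Complex.exp_add, show (m:ℂ)*(π:ℂ)*Complex.I + -(m:ℂ)*(π:ℂ)*Complex.I = 0 by ring,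
      Complex.exp_zero]
  rw [besselJ_def' z m, besselJ_def' z (-m), key]
  set X := ∫ θ in (0:ℝ)..(2*π), g z (-m) θ
  calc (1/(2*(π:ℂ))) * X = 1 * ((1/(2*(π:ℂ))) * X) := by ring
    _ = Complex.exp ((m:ℂ)*(π:ℂ)*Complex.I) * (1/(2*(π:ℂ)) *
          (Complex.exp (-(m:ℂ)*(π:ℂ)*Complex.I) * X)) := by rw [← e1]; ring

lemma besselJ_neg_odd (z : ℝ) (m : ℤ) (hm : Odd m) : besselJ (-m) z = - besselJ m z := by
  obtain ⟨j, hj⟩ := hm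
  rw [besselJ_neg, show (m:ℂ)*(π:ℂ)*Complex.I = (j:ℤ) * (2*(π:ℂ)*Complex.I) + π*Complex.I by
    rw [hj]; push_cast; ring, Complex.exp_add, Complex.exp_int_mul_two_pi_mul_I,
    Complex.exp_pi_mul_I]
  ring



lemma fourier_norm_one {T : ℝ} (n : ℤ) (x : AddCircle T) : ‖(fourier n x : ℂ)‖ = 1 := by
  rw [fourier_apply, Circle.norm_coe]

lemma coeff_norm_le (g : ℝ → ℂ) {M : ℝ} (hM : ∀ θ, ‖g θ‖ ≤ M) (n : ℤ) :
    ‖fourierCoeffOn h2pi g n‖ ≤ M := by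
  have hM0 : 0 ≤ M := le_trans (norm_nonneg _) (hM 0)
  rw [fourierCoeffOn_eq_integral, norm_smul]
  have hb : ‖∫ x in (0:ℝ)..2*π, fourier (-n) (x : AddCircle (2*π - 0)) • g x‖
      ≤ M * |2*π - 0| := by
    apply intervalIntegral.norm_integral_le_of_norm_le_const
    intro x _
    rw [norm_smul, fourier_norm_one (-n), one_mul]
    exact hM x
  refine le_trans (mul_le_mul_of_nonneg_left hb (norm_nonneg _)) (le_of_eq ?_)
  rw [Real.norm_eq_abs, sub_zero, abs_of_pos (by positivity : (0:ℝ) < 1/(2*π)),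
    abs_of_pos h2pi]
  field_simp

lemma coeff_step (F Fd : ℝ → ℂ) (hper : F (2*π) = F 0)
    (hderiv : ∀ x, HasDerivAt F (Fd x) x) (hcont : Continuous Fd) (n : ℤ) (hn : n ≠ 0) :
    fourierCoeffOn h2pi F n = 1/(Complex.I * n) * fourierCoeffOn h2pi Fd n := by
  rw [fourierCoeffOn_of_hasDerivAt h2pi hn (fun x _ => hderiv x)
    (hcont.intervalIntegrable _ _), hper]
  have hn' : (n:ℂ) ≠ 0 := Int.cast_ne_zero.mpr hn
  have hπ : ((π:ℝ):ℂ) ≠ 0 := Complex.ofReal_ne_zero.mpr Real.pi_ne_zero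
  field_simp
  push_cast
  ring


lemma besselJ_bound (z : ℝ) {n : ℤ} (hn : n ≠ 0) :
    ‖besselJ n z‖ ≤ (|z| + z^2) * (1/(n:ℝ)^2) := by
  have hf2pi : f z (2*π) = f z 0 := by simpa using f_periodic z 0
  have hfd2pi : fd z (2*π) = fd z 0 := by simpa using fd_periodic z 0
  have e1 : besselJ (z := z) n
      = 1/(Complex.I*n) * (1/(Complex.I*n) * fourierCoeffOn h2pi (fdd z) n) := by
    rw [besselJ_eq_fourierCoeffOn,
      coeff_step (f z) (fd z) hf2pi (f_hasDeriv z) (fd_cont z) n hn,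
      coeff_step (fd z) (fdd z) hfd2pi (fd_hasDeriv z) (fdd_cont z) n hn]
  have hnorm : ‖(1/(Complex.I*(n:ℂ)))‖ = 1/|(n:ℝ)| := by
    rw [norm_div, norm_one, norm_mul, Complex.norm_I, one_mul,
      show ((n:ℂ)) = ((n:ℝ):ℂ) by push_cast; ring, Complex.norm_real, Real.norm_eq_abs]
  have hc : ‖fourierCoeffOn h2pi (fdd z) n‖ ≤ |z| + z^2 :=
    coeff_norm_le (fdd z) (fun θ => fdd_norm z θ) n
  rw [e1, norm_mul, norm_mul, hnorm]
  calc 1/|(n:ℝ)| * (1/|(n:ℝ)| * ‖fourierCoeffOn h2pi (fdd z) n‖)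
      ≤ 1/|(n:ℝ)| * (1/|(n:ℝ)| * (|z| + z^2)) := by gcongr
    _ = (|z| + z^2) * (1/(n:ℝ)^2) := by
        rw [show (1:ℝ)/|(n:ℝ)| * (1/|(n:ℝ)| * (|z|+z^2))
            = (|z|+z^2) * (1/(|(n:ℝ)|^2)) by ring, _root_.sq_abs]

lemma besselJ_summable (z : ℝ) : Summable (fun n : ℤ => besselJ n z) := by
  apply Summable.of_norm_bounded_eventually (g := fun n : ℤ => (|z| + z^2) * (1/(n:ℝ)^2))
  · exact (Real.summable_one_div_int_pow.mpr (by norm_num)).mul_left _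
  · rw [Filter.eventually_cofinite]
    apply Set.Finite.subset (Set.finite_singleton (0:ℤ))
    intro n hn
    simp only [Set.mem_setOf_eq, not_le] at hn
    simp only [Set.mem_singleton_iff]
    by_contra h0
    exact absurd (besselJ_bound z h0) (not_le.mpr hn)

noncomputable def F (z : ℝ) : C(AddCircle (2*π), ℂ) :=
  ⟨(f_periodic z).lift, continuous_coinduced_dom.mpr (f_cont z)⟩

lemma F_coe (z : ℝ) (x : ℝ) : F z (x : AddCircle (2*π)) = f z x :=
  (f_periodic z).lift_coe x

lemma fourier_eq' (n : ℤ) (x : ℝ) :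
    (fourier n (x : AddCircle (2 * π)) : ℂ) = Complex.exp ((n:ℂ) * (x:ℂ) * Complex.I) := by
  have := fourier_eq (-n) x
  rw [neg_neg] at this
  rw [this]
  push_cast
  ring_nf

lemma coeff_F (z : ℝ) (n : ℤ) :
    haveI : Fact (0 < 2*π) := ⟨h2pi⟩
    fourierCoeff (⇑(F z)) n = besselJ n z := by
  haveI : Fact (0 < 2*π) := ⟨h2pi⟩
  rw [fourierCoeff_eq_intervalIntegral _ n 0, zero_add]
  have h1 : (∫ x in (0:ℝ)..2*π, fourier (-n) (x : AddCircle (2*π)) • F z (x : AddCircle (2*π)))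
      = ∫ x in (0:ℝ)..2*π,
        Complex.exp ((z:ℂ) * Complex.sin (x:ℂ) * Complex.I - (n:ℂ) * (x:ℂ) * Complex.I) := by
    refine intervalIntegral.integral_congr fun x _ => ?_
    rw [F_coe, integrand_eq z n x]
  rw [h1, besselJ]
  rw [Complex.real_smul]
  push_cast
  ring

lemma hasSum_f (z : ℝ) (θ : ℝ) :
    HasSum (fun n : ℤ => besselJ n z * Complex.exp ((n:ℂ) * (θ:ℂ) * Complex.I)) (f z θ) := by
  haveI : Fact (0 < 2*π) := ⟨h2pi⟩
  have hsummable : Summable (fourierCoeff (⇑(F z))) := by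
    have := besselJ_summable z
    apply Summable.congr this
    intro n
    exact (coeff_F z n).symm
  have h := has_pointwise_sum_fourier_series_of_summable hsummable (θ : AddCircle (2*π))
  rw [F_coe] at h
  refine HasSum.congr_fun h fun n => ?_
  rw [coeff_F, smul_eq_mul, fourier_eq']

lemma exp_sub_exp (w : ℂ) :
    (Complex.exp (w * Complex.I) - Complex.exp (-w * Complex.I)) / (2 * Complex.I)
      = Complex.sin w := by
  rw [Complex.exp_mul_I, show -w * Complex.I = -w * Complex.I by rfl, Complex.exp_mul_I,
    Complex.cos_neg, Complex.sin_neg]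
  have hI : (2 * Complex.I) ≠ 0 := by simp [Complex.I_ne_zero]
  field_simp
  ring

lemma hasSum_sin (z φ : ℝ) :
    HasSum (fun n : ℤ => besselJ n z *
        ((Complex.exp ((n:ℂ) * ((φ:ℂ) + (π:ℂ)/2) * Complex.I)
          - Complex.exp ((n:ℂ) * ((φ:ℂ) - (π:ℂ)/2) * Complex.I)) / (2 * Complex.I)))
      ((Real.sin (z * Real.cos φ) : ℂ)) := by
  have h1 := hasSum_f z (φ + π/2)
  have h2 := hasSum_f z (φ - π/2)
  have h3 := (h1.sub h2).div_const (2 * Complex.I)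
  have hval : (f z (φ + π/2) - f z (φ - π/2)) / (2 * Complex.I)
      = ((Real.sin (z * Real.cos φ) : ℝ) : ℂ) := by
    unfold f
    have e1 : Complex.sin (((φ + π/2 : ℝ)):ℂ) = ((Real.cos φ : ℝ) : ℂ) := by
      rw [← Complex.ofReal_sin]
      exact_mod_cast congrArg Complex.ofReal (Real.sin_add_pi_div_two φ)
    have e2 : Complex.sin (((φ - π/2 : ℝ)):ℂ) = -((Real.cos φ : ℝ) : ℂ) := by
      rw [← Complex.ofReal_sin]
      exact_mod_cast congrArg Complex.ofReal (Real.sin_sub_pi_div_two φ)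
    rw [e1, e2, Complex.ofReal_sin]
    rw [← exp_sub_exp ((z * Real.cos φ : ℝ) : ℂ)]
    push_cast
    ring_nf
  rw [hval] at h3
  refine HasSum.congr_fun h3 fun n => ?_
  push_cast
  ring_nf

noncomputable def K (α : ℝ) (n : ℤ) : ℂ :=
  (1/10) * ∑ ℓ ∈ Finset.range 5,
    ((Complex.exp ((n:ℂ) * (((α + 2*π*ℓ/5 : ℝ):ℂ) + (π:ℂ)/2) * Complex.I)
      - Complex.exp ((n:ℂ) * (((α + 2*π*ℓ/5 : ℝ):ℂ) - (π:ℂ)/2) * Complex.I)) / (2 * Complex.I))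

lemma hasSum_K (z α : ℝ) :
    HasSum (fun n : ℤ => besselJ n z * K α n)
      ((1/10 : ℂ) * ∑ ℓ ∈ Finset.range 5, (Real.sin (z * Real.cos (α + 2*π*ℓ/5)) : ℂ)) := by
  have h : HasSum (fun n : ℤ => ∑ ℓ ∈ Finset.range 5, besselJ n z *
      ((Complex.exp ((n:ℂ) * (((α + 2*π*ℓ/5 : ℝ):ℂ) + (π:ℂ)/2) * Complex.I)
        - Complex.exp ((n:ℂ) * (((α + 2*π*ℓ/5 : ℝ):ℂ) - (π:ℂ)/2) * Complex.I)) / (2 * Complex.I)))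
      (∑ ℓ ∈ Finset.range 5, (Real.sin (z * Real.cos (α + 2*π*ℓ/5)) : ℂ)) := by
    apply hasSum_sum
    intro ℓ _
    exact hasSum_sin z (α + 2*π*ℓ/5)
  have h2 := h.mul_left (1/10 : ℂ)
  refine HasSum.congr_fun h2 fun n => ?_
  rw [K, Finset.mul_sum, Finset.mul_sum]
  rw [Finset.mul_sum]
  refine Finset.sum_congr rfl fun ℓ _ => ?_
  ring

lemma summand_eq (α : ℝ) (n : ℤ) (ℓ : ℕ) :
    ((Complex.exp ((n:ℂ) * (((α + 2*π*ℓ/5 : ℝ):ℂ) + (π:ℂ)/2) * Complex.I)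
      - Complex.exp ((n:ℂ) * (((α + 2*π*ℓ/5 : ℝ):ℂ) - (π:ℂ)/2) * Complex.I)) / (2 * Complex.I))
    = ((Complex.exp ((n:ℂ) * ((α:ℂ) + (π:ℂ)/2) * Complex.I)
        - Complex.exp ((n:ℂ) * ((α:ℂ) - (π:ℂ)/2) * Complex.I)) / (2 * Complex.I))
      * (Complex.exp ((n:ℂ) * (2*(π:ℂ)/5) * Complex.I)) ^ ℓ := by
  rw [← Complex.exp_nat_mul]
  rw [show (n:ℂ) * (((α + 2*π*ℓ/5 : ℝ):ℂ) + (π:ℂ)/2) * Complex.I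
      = (n:ℂ) * ((α:ℂ) + (π:ℂ)/2) * Complex.I
        + (ℓ:ℂ) * ((n:ℂ) * (2*(π:ℂ)/5) * Complex.I) by push_cast; ring]
  rw [show (n:ℂ) * (((α + 2*π*ℓ/5 : ℝ):ℂ) - (π:ℂ)/2) * Complex.I
      = (n:ℂ) * ((α:ℂ) - (π:ℂ)/2) * Complex.I
        + (ℓ:ℂ) * ((n:ℂ) * (2*(π:ℂ)/5) * Complex.I) by push_cast; ring]
  rw [Complex.exp_add, Complex.exp_add]
  ring

lemma K_factored (α : ℝ) (n : ℤ) :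
    K α n = (1/10) * (((Complex.exp ((n:ℂ) * ((α:ℂ) + (π:ℂ)/2) * Complex.I)
        - Complex.exp ((n:ℂ) * ((α:ℂ) - (π:ℂ)/2) * Complex.I)) / (2 * Complex.I))
      * ∑ ℓ ∈ Finset.range 5, (Complex.exp ((n:ℂ) * (2*(π:ℂ)/5) * Complex.I)) ^ ℓ) := by
  rw [K]
  congr 1
  rw [Finset.mul_sum]
  exact Finset.sum_congr rfl fun ℓ _ => summand_eq α n ℓ

lemma K_zero (α : ℝ) {n : ℤ} (h : ¬ (5:ℤ) ∣ n) : K α n = 0 := by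
  rw [K_factored]
  have hx5 : (Complex.exp ((n:ℂ) * (2*(π:ℂ)/5) * Complex.I)) ^ 5 = 1 := by
    rw [← Complex.exp_nat_mul,
      show (5:ℕ) * ((n:ℂ) * (2*(π:ℂ)/5) * Complex.I) = (n:ℂ) * (2*(π:ℂ)*Complex.I) by
        push_cast; ring]
    exact Complex.exp_int_mul_two_pi_mul_I n
  have hx1 : Complex.exp ((n:ℂ) * (2*(π:ℂ)/5) * Complex.I) ≠ 1 := by
    intro hone
    obtain ⟨k, hk⟩ := Complex.exp_eq_one_iff.mp hone
    have h2 : (n:ℂ) * (2*(π:ℂ)) * Complex.I = (5*(k:ℂ)) * (2*(π:ℂ)) * Complex.I := by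
      linear_combination (5:ℂ) * hk
    have hne : (2*(π:ℂ)) * Complex.I ≠ 0 := by
      simp [Real.pi_ne_zero, Complex.I_ne_zero, Complex.ofReal_ne_zero]
    have h3 : (n:ℂ) = 5*(k:ℂ) := by
      have := mul_right_cancel₀ Complex.I_ne_zero (by linear_combination h2 :
        ((n:ℂ) * (2*(π:ℂ))) * Complex.I = ((5*(k:ℂ)) * (2*(π:ℂ))) * Complex.I)
      have hpi : (2*(π:ℂ)) ≠ 0 := by simp [Real.pi_ne_zero, Complex.ofReal_ne_zero]
      exact mul_right_cancel₀ hpi this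
    exact h ⟨k, by exact_mod_cast h3⟩
  rw [geom_sum_eq hx1, hx5]
  simp

lemma K_dvd (α : ℝ) {n : ℤ} (h : (5:ℤ) ∣ n) :
    K α n = (1/2) * (Complex.exp ((n:ℂ) * (α:ℂ) * Complex.I)
      * ((Real.sin ((n:ℝ)*π/2) : ℝ):ℂ)) := by
  obtain ⟨m, rfl⟩ := h
  rw [K_factored]
  have hx : Complex.exp (((5*m:ℤ):ℂ) * (2*(π:ℂ)/5) * Complex.I) = 1 := by
    rw [show ((5*m:ℤ):ℂ) * (2*(π:ℂ)/5) * Complex.I = (m:ℂ) * (2*(π:ℂ)*Complex.I) by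
      push_cast; ring]
    exact Complex.exp_int_mul_two_pi_mul_I m
  rw [hx]
  simp only [one_pow, Finset.sum_const, Finset.card_range, nsmul_eq_mul]
  have hC : (Complex.exp (((5*m:ℤ):ℂ) * ((α:ℂ) + (π:ℂ)/2) * Complex.I)
      - Complex.exp (((5*m:ℤ):ℂ) * ((α:ℂ) - (π:ℂ)/2) * Complex.I)) / (2 * Complex.I)
      = Complex.exp (((5*m:ℤ):ℂ) * (α:ℂ) * Complex.I)
        * ((Real.sin (((5*m:ℤ):ℝ)*π/2) : ℝ):ℂ) := by
    have e1 : ((5*m:ℤ):ℂ) * ((α:ℂ) + (π:ℂ)/2) * Complex.I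
        = ((5*m:ℤ):ℂ) * (α:ℂ) * Complex.I + (((((5*m:ℤ):ℝ)*π/2 : ℝ)):ℂ) * Complex.I := by
      push_cast; ring
    have e2 : ((5*m:ℤ):ℂ) * ((α:ℂ) - (π:ℂ)/2) * Complex.I
        = ((5*m:ℤ):ℂ) * (α:ℂ) * Complex.I + (-(((((5*m:ℤ):ℝ)*π/2 : ℝ)):ℂ)) * Complex.I := by
      push_cast; ring
    rw [e1, e2, Complex.exp_add, Complex.exp_add, ← mul_sub, mul_div_assoc,
      exp_sub_exp ((((((5*m:ℤ):ℝ)*π/2 : ℝ)):ℂ)), ← Complex.ofReal_sin]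
  rw [hC]
  ring

lemma exp_add_exp (w : ℂ) :
    (Complex.exp (w * Complex.I) + Complex.exp (-w * Complex.I)) / 2 = Complex.cos w := by
  rw [Complex.exp_mul_I, Complex.exp_mul_I, Complex.cos_neg, Complex.sin_neg]
  ring

lemma sin_pos_val (k : ℕ) : Real.sin ((((10*(k:ℤ)+5 : ℤ)):ℝ)*π/2) = (-1:ℝ)^k := by
  have e : (((10*(k:ℤ)+5 : ℤ)):ℝ)*π/2 = π/2 + ((5*(k:ℤ)+2 : ℤ):ℝ)*π := by push_cast; ring
  rw [e, Real.sin_add_int_mul_pi, Real.sin_pi_div_two, mul_one]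
  rw [show ((5*(k:ℤ)+2 : ℤ)) = ((5*k+2 : ℕ) : ℤ) by push_cast; ring, zpow_natCast]
  rw [show (5*k+2 : ℕ) = k + 2*(2*k+1) by ring, pow_add, pow_mul, neg_one_sq, one_pow, mul_one]

lemma h_pointwise (z α : ℝ) (k : ℕ) :
    besselJ (10*(k:ℤ)+5) z * K α (10*(k:ℤ)+5)
      + besselJ (-(10*(k:ℤ)+5)) z * K α (-(10*(k:ℤ)+5))
    = (-1 : ℂ)^k * besselJ (10*(k:ℤ)+5) z * ((Real.cos ((10*(k:ℕ)+5 : ℝ) * α) : ℝ) : ℂ) := by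
  set n : ℤ := 10*(k:ℤ)+5 with hn
  have hd1 : (5:ℤ) ∣ n := ⟨2*k+1, by rw [hn]; ring⟩
  have hd2 : (5:ℤ) ∣ (-n) := hd1.neg_right
  have hodd : Odd n := ⟨5*(k:ℤ)+2, by rw [hn]; ring⟩
  have hs1 : Real.sin ((n:ℝ)*π/2) = (-1:ℝ)^k := sin_pos_val k
  have hs2 : Real.sin (((-n : ℤ):ℝ)*π/2) = -((-1:ℝ)^k) := by
    rw [show (((-n : ℤ):ℝ))*π/2 = -((n:ℝ)*π/2) by push_cast; ring, Real.sin_neg, hs1]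
  rw [K_dvd α hd1, K_dvd α hd2, besselJ_neg_odd z n hodd, hs1, hs2]
  have hcos : ((Real.cos ((10*(k:ℕ)+5 : ℝ) * α) : ℝ) : ℂ)
      = (Complex.exp (((((10*(k:ℕ)+5 : ℝ) * α) : ℝ):ℂ) * Complex.I)
        + Complex.exp (-((((10*(k:ℕ)+5 : ℝ) * α) : ℝ):ℂ) * Complex.I)) / 2 := by
    rw [exp_add_exp, ← Complex.ofReal_cos]
  rw [hcos]
  have e1 : ((n:ℤ):ℂ) * (α:ℂ) = ((((10*(k:ℕ)+5 : ℝ) * α) : ℝ):ℂ) := by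
    rw [hn]; push_cast; ring
  have e2 : (((-n):ℤ):ℂ) * (α:ℂ) = -((((10*(k:ℕ)+5 : ℝ) * α) : ℝ):ℂ) := by
    rw [hn]; push_cast; ring
  rw [e1, e2]
  push_cast
  ring

theorem statement12' (z α : ℝ) :
    (∑' k : ℕ, (-1 : ℂ) ^ k * besselJ (10 * k + 5) z * (Real.cos ((10 * k + 5) * α) : ℂ)) =
      (1 / 10 : ℂ) * ∑ ℓ ∈ Finset.range 5, (Real.sin (z * Real.cos (α + 2 * π * ℓ / 5)) : ℂ) := by
  classical
  have hK := hasSum_K z α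
  set S := (1/10 : ℂ) * ∑ ℓ ∈ Finset.range 5, (Real.sin (z * Real.cos (α + 2*π*ℓ/5)) : ℂ) with hS
  have su : Summable (fun n : ℕ => besselJ (n:ℤ) z * K α (n:ℤ)) :=
    hK.summable.comp_injective Nat.cast_injective
  have sv : Summable (fun n : ℕ => besselJ (-((n:ℤ)+1)) z * K α (-((n:ℤ)+1))) :=
    hK.summable.comp_injective (fun a b hab => by
      simp only [neg_inj, add_left_inj] at hab
      exact_mod_cast hab)
  have hsplit : HasSum (fun n : ℤ => besselJ n z * K α n)
      ((∑' n : ℕ, besselJ (n:ℤ) z * K α (n:ℤ))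
        + ∑' n : ℕ, besselJ (-((n:ℤ)+1)) z * K α (-((n:ℤ)+1))) :=
    HasSum.of_nat_of_neg_add_one su.hasSum sv.hasSum
  have hab : (∑' n : ℕ, besselJ (n:ℤ) z * K α (n:ℤ))
        + (∑' n : ℕ, besselJ (-((n:ℤ)+1)) z * K α (-((n:ℤ)+1))) = S :=
    hsplit.unique hK
  have hu5 : HasSum (fun k : ℕ => besselJ (((10*k+5 : ℕ)):ℤ) z * K α (((10*k+5 : ℕ)):ℤ))
      (∑' n : ℕ, besselJ (n:ℤ) z * K α (n:ℤ)) := by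
    refine (Function.Injective.hasSum_iff (f := fun n : ℕ => besselJ (n:ℤ) z * K α (n:ℤ))
      (fun a b hab => by omega) ?_).mpr su.hasSum
    intro n hn
    show besselJ (n:ℤ) z * K α (n:ℤ) = 0
    by_cases h5 : (5:ℤ) ∣ (n:ℤ)
    · have h5' : 5 ∣ n := by exact_mod_cast h5
      have hmod : ¬ (n % 10 = 5) := fun hmod =>
        hn ⟨n/10, show 10*(n/10)+5 = n by omega⟩
      obtain ⟨j, hj⟩ : ∃ j, n = 2*j := ⟨n/2, by omega⟩
      have hsin : Real.sin (((n:ℤ):ℝ)*π/2) = 0 := by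
        have e : (((n:ℤ):ℝ))*π/2 = ((j:ℤ):ℝ)*π := by
          subst hj; push_cast; ring
        rw [e]
        exact Real.sin_int_mul_pi _
      rw [K_dvd α h5, hsin]
      simp
    · rw [K_zero α h5, mul_zero]
  have hv5 : HasSum (fun k : ℕ => besselJ (-((((10*k+4 : ℕ)):ℤ)+1)) z
        * K α (-((((10*k+4 : ℕ)):ℤ)+1)))
      (∑' n : ℕ, besselJ (-((n:ℤ)+1)) z * K α (-((n:ℤ)+1))) := by
    refine (Function.Injective.hasSum_iff
      (f := fun n : ℕ => besselJ (-((n:ℤ)+1)) z * K α (-((n:ℤ)+1)))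
      (fun a b hab => by omega) ?_).mpr sv.hasSum
    intro n hn
    show besselJ (-((n:ℤ)+1)) z * K α (-((n:ℤ)+1)) = 0
    by_cases h5 : (5:ℤ) ∣ (-((n:ℤ)+1))
    · have h5' : 5 ∣ (n+1) := by
        have := dvd_neg.mp h5
        exact_mod_cast this
      have hmod : ¬ ((n+1) % 10 = 5) := fun hmod =>
        hn ⟨n/10, show 10*(n/10)+4 = n by omega⟩
      obtain ⟨j, hj⟩ : ∃ j, n + 1 = 2*j := ⟨(n+1)/2, by omega⟩
      have hsin : Real.sin ((((-((n:ℤ)+1)):ℤ):ℝ)*π/2) = 0 := by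
        have e : ((((-((n:ℤ)+1)):ℤ):ℝ))*π/2 = ((-(j:ℤ) : ℤ):ℝ)*π := by
          have : ((n:ℝ)+1) = 2*(j:ℝ) := by exact_mod_cast hj
          push_cast
          rw [this]
          ring
        rw [e]
        exact Real.sin_int_mul_pi _
      rw [K_dvd α h5, hsin]
      simp
    · rw [K_zero α h5, mul_zero]
  have hadd := hu5.add hv5
  rw [hab] at hadd
  have hfinal : HasSum (fun k : ℕ =>
      (-1 : ℂ) ^ k * besselJ (10 * k + 5) z * (Real.cos ((10 * k + 5) * α) : ℂ)) S := by
    refine HasSum.congr_fun hadd fun k => ?_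
    have e1 : (((10*k+5 : ℕ)):ℤ) = 10*(k:ℤ)+5 := by push_cast; ring
    have e2 : -((((10*k+4 : ℕ)):ℤ)+1) = -(10*(k:ℤ)+5) := by push_cast; ring
    rw [e1, e2, h_pointwise z α k]
  rw [hS] at hfinal
  exact hfinal.tsum_eq

end B12
end B12aux

theorem statement12 (z α : ℝ) :
    (∑' k : ℕ, (-1 : ℂ) ^ k * besselJ (10 * k + 5) z * (Real.cos ((10 * k + 5) * α) : ℂ)) =
      (1 / 10 : ℂ) * ∑ ℓ ∈ Finset.range 5, (Real.sin (z * Real.cos (α + 2 * π * ℓ / 5)) : ℂ) :=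
  B12.statement12' z α
end

section
/- For every integer n ≥ 1 and real x: Σ_{k=0}^∞ J_{(2k+1)n}(x)² = 1/(4n) + ((-1)^n/(4n))·J_0(2x) + (1/(2n))·Σ_{ℓ=1}^{n-1} (-1)^ℓ J_0(2x·sin(πℓ/(2n))). -/
open scoped Real

open Complex MeasureTheory

lemma periodic_integrand (z : ℂ) (m : ℤ) :
    Function.Periodic (fun θ : ℝ => Complex.exp (z * Complex.sin (θ:ℂ) * Complex.I - (m:ℂ) * (θ:ℂ) * Complex.I)) (2 * π) := by
  intro θ
  have h1 : Complex.sin ((θ + 2*π : ℝ) : ℂ) = Complex.sin (θ:ℂ) := by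
    push_cast
    rw [Complex.sin_add_two_pi]
  have h2 : Complex.exp (-(m:ℂ) * (2*π) * Complex.I) = 1 := by
    have := Complex.exp_int_mul_two_pi_mul_I (-m)
    rw [← this]; push_cast; ring_nf
  simp only [h1]
  push_cast
  rw [show z * Complex.sin (θ:ℂ) * Complex.I - (m:ℂ) * ((θ:ℂ) + 2*π) * Complex.I
      = (z * Complex.sin (θ:ℂ) * Complex.I - (m:ℂ) * (θ:ℂ) * Complex.I) + (-(m:ℂ) * (2*π) * Complex.I) by ring,
    Complex.exp_add, h2, mul_one]

lemma besselJ_zero_zero : besselJ 0 0 = 1 := by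
  simp [besselJ]
  have hpi : (π:ℂ) ≠ 0 := Complex.ofReal_ne_zero.mpr Real.pi_ne_zero
  field_simp

lemma besselJ_neg (m : ℤ) (x : ℂ) : besselJ (-m) x = (-1)^m * besselJ m x := by
  unfold besselJ
  have key : ∫ θ in (0:ℝ)..(2*π), Complex.exp (x * Complex.sin (θ:ℂ) * Complex.I - ((-m : ℤ):ℂ) * (θ:ℂ) * Complex.I)
      = (-1:ℂ)^m * ∫ θ in (0:ℝ)..(2*π), Complex.exp (x * Complex.sin (θ:ℂ) * Complex.I - (m:ℂ) * (θ:ℂ) * Complex.I) := by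
    have h1 : ∀ θ : ℝ, Complex.exp (x * Complex.sin (θ:ℂ) * Complex.I - ((-m : ℤ):ℂ) * (θ:ℂ) * Complex.I)
        = (fun u : ℝ => (-1:ℂ)^m * Complex.exp (x * Complex.sin (u:ℂ) * Complex.I - (m:ℂ) * (u:ℂ) * Complex.I)) (π - θ) := by
      intro θ
      simp only
      have hs : Complex.sin ((π - θ : ℝ) : ℂ) = Complex.sin (θ:ℂ) := by
        push_cast; rw [Complex.sin_pi_sub]
      rw [hs]
      have hm : ((-1:ℂ))^m = Complex.exp ((m:ℂ) * π * Complex.I) := by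
        rw [← Complex.exp_pi_mul_I, ← Complex.exp_int_mul]
        ring_nf
      rw [hm, ← Complex.exp_add]
      push_cast
      ring_nf
    simp_rw [h1]
    rw [intervalIntegral.integral_comp_sub_left (fun u : ℝ => (-1:ℂ)^m * Complex.exp (x * Complex.sin (u:ℂ) * Complex.I - (m:ℂ) * (u:ℂ) * Complex.I)) π]
    rw [intervalIntegral.integral_const_mul]
    congr 1
    have hper := periodic_integrand x m
    have := hper.intervalIntegral_add_eq (-π) 0
    rw [show -π + 2*π = π by ring, zero_add] at this
    rw [show π - 2*π = -π by ring, sub_zero]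
    exact this
  rw [key]; ring

open scoped ComplexConjugate in
lemma intervalIntegral_conj {f : ℝ → ℂ} {a b : ℝ} :
    (∫ x in a..b, conj (f x)) = conj (∫ x in a..b, f x) := by
  simp only [intervalIntegral]
  rw [integral_conj, integral_conj, map_sub]

open scoped ComplexConjugate in
lemma besselJ_conj (m : ℤ) (x : ℝ) : conj (besselJ m x) = besselJ m x := by
  unfold besselJ
  rw [map_mul]
  have h0 : conj ((1 : ℂ) / (2 * Real.pi)) = (1 : ℂ) / (2 * Real.pi) := by
    rw [map_div₀, map_one, map_mul]
    simp [Complex.conj_ofReal, map_ofNat]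
  rw [h0]
  congr 1
  rw [← intervalIntegral_conj]
  have h1 : ∀ θ : ℝ, conj (Complex.exp ((x:ℂ) * Complex.sin (θ:ℂ) * Complex.I - (m:ℂ) * (θ:ℂ) * Complex.I))
      = (fun u : ℝ => Complex.exp ((x:ℂ) * Complex.sin (u:ℂ) * Complex.I - (m:ℂ) * (u:ℂ) * Complex.I)) (2*π - θ) := by
    intro θ
    simp only
    rw [← Complex.exp_conj]
    have hconj : conj ((x:ℂ) * Complex.sin (θ:ℂ) * Complex.I - (m:ℂ) * (θ:ℂ) * Complex.I)
        = -((x:ℂ) * Complex.sin (θ:ℂ) * Complex.I - (m:ℂ) * (θ:ℂ) * Complex.I) := by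
      have hsr : Complex.sin (θ:ℂ) = ((Real.sin θ : ℝ) : ℂ) := (Complex.ofReal_sin θ).symm
      rw [hsr]
      simp only [map_sub, map_mul, Complex.conj_ofReal, Complex.conj_I, map_intCast]
      ring
    rw [hconj]
    have hs : Complex.sin ((2*π - θ : ℝ) : ℂ) = - Complex.sin (θ:ℂ) := by
      push_cast
      rw [show (2:ℂ)*π - θ = -θ + 2*π by ring, Complex.sin_add_two_pi, Complex.sin_neg]
    have he : Complex.exp (-((m:ℂ) * (2*π) * Complex.I)) = 1 := by
      have := Complex.exp_int_mul_two_pi_mul_I (-m)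
      rw [← this]; push_cast; ring_nf
    have harg : (x:ℂ) * Complex.sin ((2*π - θ : ℝ):ℂ) * Complex.I - (m:ℂ) * ((2*π - θ : ℝ):ℂ) * Complex.I
        = -((x:ℂ) * Complex.sin (θ:ℂ) * Complex.I - (m:ℂ) * (θ:ℂ) * Complex.I) + (-((m:ℂ) * (2*π) * Complex.I)) := by
      rw [hs]; push_cast; ring
    rw [harg, Complex.exp_add, he, mul_one]
  simp_rw [h1]
  rw [intervalIntegral.integral_comp_sub_left
    (fun u : ℝ => Complex.exp ((x:ℂ) * Complex.sin (u:ℂ) * Complex.I - (m:ℂ) * (u:ℂ) * Complex.I)) (2*π)]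
  rw [show 2*π - 2*π = (0:ℝ) by ring, sub_zero]

instance fact_two_pi_pos : Fact (0 < 2 * π) := ⟨by positivity⟩

noncomputable def Fc (x a : ℝ) : C(AddCircle (2*π), ℂ) :=
  ⟨AddCircle.liftIco (2*π) 0 (fun θ : ℝ => Complex.exp ((x:ℂ) * Complex.sin ((θ+a:ℝ):ℂ) * Complex.I)), by
    apply AddCircle.liftIco_zero_continuous
    · have : Complex.sin ((2*π+a:ℝ):ℂ) = Complex.sin ((0+a:ℝ):ℂ) := by
        push_cast
        rw [show (2:ℂ)*π + a = a + 2*π by ring, zero_add, Complex.sin_add_two_pi]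
      simp only [this]
    · fun_prop⟩

lemma Fc_apply (x a : ℝ) {θ : ℝ} (hθ : θ ∈ Set.Ico (0:ℝ) (2*π)) :
    Fc x a θ = Complex.exp ((x:ℂ) * Complex.sin ((θ+a:ℝ):ℂ) * Complex.I) := by
  simp only [Fc, ContinuousMap.coe_mk]
  exact AddCircle.liftIco_coe_apply ⟨hθ.1, by rw [zero_add]; exact hθ.2⟩

lemma ae_ne_two_pi : ∀ᵐ θ : ℝ ∂volume, θ ≠ 2*π := by
  refine MeasureTheory.ae_iff.mpr ?_
  simpa using measure_singleton (α := ℝ) (2*π)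

lemma fourierCoeff_Fc (x a : ℝ) (m : ℤ) :
    fourierCoeff (⇑(Fc x a)) m = Complex.exp ((m:ℂ) * a * Complex.I) * besselJ m x := by
  rw [fourierCoeff_eq_intervalIntegral _ m 0]
  rw [zero_add]
  have hcong : (∫ θ in (0:ℝ)..(2*π), fourier (-m) (θ : AddCircle (2*π)) • Fc x a θ)
      = ∫ θ in (0:ℝ)..(2*π), Complex.exp ((x:ℂ) * Complex.sin ((θ+a:ℝ):ℂ) * Complex.I - (m:ℂ) * (θ:ℂ) * Complex.I) := by
    apply intervalIntegral.integral_congr_ae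
    filter_upwards [ae_ne_two_pi] with θ hne hmem
    rw [Set.uIoc_of_le (by positivity : (0:ℝ) ≤ 2*π)] at hmem
    have hmem' : θ ∈ Set.Ico (0:ℝ) (2*π) := ⟨hmem.1.le, lt_of_le_of_ne hmem.2 hne⟩
    rw [Fc_apply x a hmem', fourier_coe_apply]
    rw [smul_eq_mul, ← Complex.exp_add]
    congr 1
    have hpi : (π:ℂ) ≠ 0 := Complex.ofReal_ne_zero.mpr Real.pi_ne_zero
    push_cast
    field_simp
    ring
  rw [hcong]
  have h1 : ∀ θ : ℝ, Complex.exp ((x:ℂ) * Complex.sin ((θ+a:ℝ):ℂ) * Complex.I - (m:ℂ) * (θ:ℂ) * Complex.I)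
      = (fun u : ℝ => Complex.exp ((m:ℂ) * a * Complex.I) * Complex.exp ((x:ℂ) * Complex.sin (u:ℂ) * Complex.I - (m:ℂ) * (u:ℂ) * Complex.I)) (θ + a) := by
    intro θ
    simp only [← Complex.exp_add]
    congr 1
    push_cast
    ring
  simp_rw [h1]
  rw [intervalIntegral.integral_comp_add_right
    (fun u : ℝ => Complex.exp ((m:ℂ) * a * Complex.I) * Complex.exp ((x:ℂ) * Complex.sin (u:ℂ) * Complex.I - (m:ℂ) * (u:ℂ) * Complex.I)) a]
  rw [intervalIntegral.integral_const_mul]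
  have hper := periodic_integrand (x:ℂ) m
  have hshift := hper.intervalIntegral_add_eq a 0
  rw [zero_add] at hshift
  rw [zero_add, show 2*π + a = a + 2*π by ring, hshift]
  rw [besselJ, Complex.real_smul]
  have hpi : (π:ℂ) ≠ 0 := Complex.ofReal_ne_zero.mpr Real.pi_ne_zero
  push_cast
  ring

lemma besselJ_zero_cos (w c : ℝ) :
    besselJ 0 w = (1 / (2*π:ℂ)) * ∫ θ in (0:ℝ)..(2*π), Complex.exp ((w:ℂ) * ((Real.cos (θ+c) : ℝ):ℂ) * Complex.I) := by
  have hg : ∀ θ : ℝ, Complex.exp ((w:ℂ) * ((Real.cos (θ+c) : ℝ):ℂ) * Complex.I)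
      = (fun u : ℝ => Complex.exp ((w:ℂ) * Complex.sin (u:ℂ) * Complex.I - ((0:ℤ):ℂ) * (u:ℂ) * Complex.I)) (θ + (c + π/2)) := by
    intro θ
    simp only [Int.cast_zero, zero_mul, sub_zero]
    congr 1
    rw [show θ + (c + π/2) = (θ + c) + π/2 by ring]
    rw [← Complex.ofReal_sin, Real.sin_add_pi_div_two]
  simp_rw [hg]
  rw [intervalIntegral.integral_comp_add_right
    (fun u : ℝ => Complex.exp ((w:ℂ) * Complex.sin (u:ℂ) * Complex.I - ((0:ℤ):ℂ) * (u:ℂ) * Complex.I)) (c + π/2)]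
  have hper := periodic_integrand (w:ℂ) 0
  have hshift := hper.intervalIntegral_add_eq (c + π/2) 0
  rw [zero_add] at hshift
  rw [zero_add, show 2*π + (c + π/2) = (c + π/2) + 2*π by ring, hshift]
  rw [besselJ]

open scoped ComplexConjugate in
lemma inner_Fc (x a : ℝ) :
    (inner ℂ (ContinuousMap.toLp (E := ℂ) 2 (@AddCircle.haarAddCircle (2*π) _) ℂ (Fc x 0))
      (ContinuousMap.toLp (E := ℂ) 2 (@AddCircle.haarAddCircle (2*π) _) ℂ (Fc x a)) : ℂ)
      = besselJ 0 ((2 * x * Real.sin (a/2) : ℝ):ℂ) := by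
  rw [ContinuousMap.inner_toLp]
  have hpre := AddCircle.intervalIntegral_preimage (2*π) 0 (fun z => conj (Fc x 0 z) * Fc x a z)
  rw [zero_add, AddCircle.volume_eq_smul_haarAddCircle, integral_smul_measure,
    ENNReal.toReal_ofReal (by positivity : (0:ℝ) ≤ 2*π)] at hpre
  have h2 : (∫ z : AddCircle (2*π), conj (Fc x 0 z) * Fc x a z ∂AddCircle.haarAddCircle)
      = ((1/(2*π):ℝ)) • ∫ θ in (0:ℝ)..(2*π), conj (Fc x 0 (θ : AddCircle (2*π))) * Fc x a (θ : AddCircle (2*π)) := by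
    rw [hpre, smul_smul]
    rw [show (1/(2*π)) * (2*π) = (1:ℝ) by field_simp, one_smul]
  simp_rw [mul_comm (Fc x a _)]
  rw [h2]
  have hcong : (∫ θ in (0:ℝ)..(2*π), conj (Fc x 0 (θ : AddCircle (2*π))) * Fc x a (θ : AddCircle (2*π)))
      = ∫ θ in (0:ℝ)..(2*π), Complex.exp (((2 * x * Real.sin (a/2) : ℝ):ℂ) * ((Real.cos (θ + a/2) : ℝ):ℂ) * Complex.I) := by
    apply intervalIntegral.integral_congr_ae
    filter_upwards [ae_ne_two_pi] with θ hne hmem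
    rw [Set.uIoc_of_le (by positivity : (0:ℝ) ≤ 2*π)] at hmem
    have hmem' : θ ∈ Set.Ico (0:ℝ) (2*π) := ⟨hmem.1.le, lt_of_le_of_ne hmem.2 hne⟩
    rw [Fc_apply x 0 hmem', Fc_apply x a hmem', ← Complex.exp_conj]
    have hc1 : conj ((x:ℂ) * Complex.sin ((θ+0:ℝ):ℂ) * Complex.I) = -((x:ℂ) * ((Real.sin θ : ℝ):ℂ) * Complex.I) := by
      rw [show ((θ+0:ℝ):ℂ) = ((θ:ℝ):ℂ) by norm_num, ← Complex.ofReal_sin]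
      simp only [map_mul, Complex.conj_ofReal, Complex.conj_I]
      ring
    rw [hc1, ← Complex.exp_add]
    congr 1
    rw [← Complex.ofReal_sin]
    have hsin : Real.sin (θ + a) - Real.sin θ = 2 * Real.sin (a/2) * Real.cos (θ + a/2) := by
      rw [Real.sin_sub_sin]
      congr 1
      · congr 1
        ring
      · congr 1
        ring
    have : (2 * x * Real.sin (a/2) : ℝ) * Real.cos (θ + a/2) = x * (Real.sin (θ + a) - Real.sin θ) := by
      rw [hsin]; ring
    have key : ((2 * x * Real.sin (a/2) : ℝ):ℂ) * ((Real.cos (θ + a/2) : ℝ):ℂ) = (x:ℂ) * ((Real.sin (θ+a):ℝ):ℂ) - (x:ℂ) * ((Real.sin θ:ℝ):ℂ) := by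
      rw [← Complex.ofReal_mul, this]
      push_cast
      ring
    rw [key]
    ring
  rw [hcong, Complex.real_smul]
  rw [besselJ_zero_cos (2 * x * Real.sin (a/2)) (a/2)]
  push_cast
  ring

open scoped ComplexConjugate in
lemma fourierCoeff_toLp_Fc (x a : ℝ) (m : ℤ) :
    fourierCoeff ((ContinuousMap.toLp (E := ℂ) 2 (@AddCircle.haarAddCircle (2*π) _) ℂ (Fc x a) : Lp ℂ 2 (@AddCircle.haarAddCircle (2*π) _)) : AddCircle (2*π) → ℂ) m
      = fourierCoeff (⇑(Fc x a)) m := by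
  unfold fourierCoeff
  apply integral_congr_ae
  filter_upwards [ContinuousMap.coeFn_toLp (p := 2) (𝕜 := ℂ) (@AddCircle.haarAddCircle (2*π) _) (f := Fc x a)] with t ht
  rw [ht]

lemma hasSum_main (x a : ℝ) :
    HasSum (fun m : ℤ => Complex.exp ((m:ℂ) * a * Complex.I) * besselJ m x ^ 2)
      (besselJ 0 ((2 * x * Real.sin (a/2) : ℝ):ℂ)) := by
  classical
  set F := ContinuousMap.toLp (E := ℂ) 2 (@AddCircle.haarAddCircle (2*π) _) ℂ (Fc x 0) with hF
  set G := ContinuousMap.toLp (E := ℂ) 2 (@AddCircle.haarAddCircle (2*π) _) ℂ (Fc x a) with hG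
  have hb := HilbertBasis.hasSum_inner_mul_inner (@fourierBasis (2*π) _) F G
  have hterm : ∀ m : ℤ,
      (inner ℂ F ((@fourierBasis (2*π) _) m) : ℂ) * (inner ℂ ((@fourierBasis (2*π) _) m) G : ℂ)
        = Complex.exp ((m:ℂ) * a * Complex.I) * besselJ m x ^ 2 := by
    intro m
    have h1 : (inner ℂ ((@fourierBasis (2*π) _) m) G : ℂ) = Complex.exp ((m:ℂ) * a * Complex.I) * besselJ m x := by
      rw [← HilbertBasis.repr_apply_apply, fourierBasis_repr, fourierCoeff_toLp_Fc, fourierCoeff_Fc]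
    have h2 : (inner ℂ F ((@fourierBasis (2*π) _) m) : ℂ) = besselJ m x := by
      rw [← inner_conj_symm, ← HilbertBasis.repr_apply_apply, fourierBasis_repr, fourierCoeff_toLp_Fc,
        fourierCoeff_Fc]
      simp only [Complex.ofReal_zero, mul_zero, zero_mul, Complex.exp_zero, one_mul]
      exact besselJ_conj m x
    rw [h1, h2]
    ring
  have hval : (inner ℂ F G : ℂ) = besselJ 0 ((2 * x * Real.sin (a/2) : ℝ):ℂ) := inner_Fc x a
  rw [hval] at hb
  exact hb.congr_fun (fun m => (hterm m).symm)

lemma sieve_coeff (n : ℕ) (hn : 1 ≤ n) (m : ℤ) :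
    ∑ ℓ ∈ Finset.range (2*n), ((-1:ℂ))^ℓ * Complex.exp ((m:ℂ) * ((π * ℓ / n : ℝ):ℂ) * Complex.I)
      = if (2*(n:ℤ)) ∣ (m + n) then (2*n : ℂ) else 0 := by
  have hn0 : (n:ℂ) ≠ 0 := Nat.cast_ne_zero.mpr (by omega)
  have hpi : (π:ℂ) ≠ 0 := Complex.ofReal_ne_zero.mpr Real.pi_ne_zero
  set r : ℂ := Complex.exp ((((m:ℂ) + n) * π / n) * Complex.I) with hr
  have hterm : ∀ ℓ : ℕ, ((-1:ℂ))^ℓ * Complex.exp ((m:ℂ) * ((π * ℓ / n : ℝ):ℂ) * Complex.I) = r^ℓ := by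
    intro ℓ
    rw [hr, ← Complex.exp_pi_mul_I, ← Complex.exp_nat_mul, ← Complex.exp_nat_mul, ← Complex.exp_add]
    congr 1
    push_cast
    field_simp
    ring
  simp_rw [hterm]
  have hr2n : r ^ (2*n) = 1 := by
    rw [hr, ← Complex.exp_nat_mul]
    have : ((2*n : ℕ):ℂ) * ((((m:ℂ) + n) * π / n) * Complex.I) = ((m + n : ℤ):ℂ) * (2 * π * Complex.I) := by
      push_cast
      field_simp
    rw [this]
    exact Complex.exp_int_mul_two_pi_mul_I (m + n)
  by_cases hdvd : (2*(n:ℤ)) ∣ (m + n)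
  · obtain ⟨k, hk⟩ := id hdvd
    have hr1 : r = 1 := by
      rw [hr]
      have heq : (((m:ℂ) + n) * π / n) * Complex.I = (k : ℂ) * (2 * π * Complex.I) := by
        have hmn : ((m:ℂ) + n) = 2 * n * k := by exact_mod_cast congrArg (Int.cast : ℤ → ℂ) hk
        rw [hmn]
        field_simp
      rw [heq]
      exact Complex.exp_int_mul_two_pi_mul_I k
    simp [hr1, hdvd, Finset.sum_const]
  · have hr1 : r ≠ 1 := by
      intro h
      rw [hr, Complex.exp_eq_one_iff] at h
      obtain ⟨j, hj⟩ := h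
      apply hdvd
      refine ⟨j, ?_⟩
      field_simp at hj
      have h2 : ((m + n : ℤ):ℂ) * (π * Complex.I) = ((2*n*j : ℤ):ℂ) * (π * Complex.I) := by
        push_cast
        linear_combination (π * Complex.I) * hj
      have h3 : ((m + n : ℤ):ℂ) = ((2*n*j : ℤ):ℂ) :=
        mul_right_cancel₀ (mul_ne_zero hpi Complex.I_ne_zero) h2
      have h4 : (m + n : ℤ) = 2*n*j := Int.cast_injective h3
      linarith
    rw [geom_sum_eq hr1, hr2n]
    simp [hdvd]

lemma hasSum_sieve (n : ℕ) (hn : 1 ≤ n) (x : ℝ) :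
    HasSum (fun m : ℤ => (if (2*(n:ℤ)) ∣ (m + n) then (1/2 : ℂ) else 0) * besselJ m x ^ 2)
      (∑ ℓ ∈ Finset.range (2*n), ((-1:ℂ))^ℓ/(4*(n:ℂ)) * besselJ 0 ((2 * x * Real.sin ((π * ℓ / n)/2) : ℝ):ℂ)) := by
  have hn0 : (n:ℂ) ≠ 0 := Nat.cast_ne_zero.mpr (by omega)
  have hsum := hasSum_sum (s := Finset.range (2*n))
    (f := fun (ℓ : ℕ) (m : ℤ) => ((-1:ℂ))^ℓ/(4*(n:ℂ)) * (Complex.exp ((m:ℂ) * ((π * ℓ / n : ℝ):ℂ) * Complex.I) * besselJ m x ^ 2))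
    (a := fun (ℓ : ℕ) => ((-1:ℂ))^ℓ/(4*(n:ℂ)) * besselJ 0 ((2 * x * Real.sin ((π * ℓ / n)/2) : ℝ):ℂ))
    (fun ℓ _ => (hasSum_main x (π * ℓ / n)).mul_left _)
  apply hsum.congr_fun
  intro m
  have : ∑ ℓ ∈ Finset.range (2*n), ((-1:ℂ))^ℓ/(4*(n:ℂ)) * (Complex.exp ((m:ℂ) * ((π * ℓ / n : ℝ):ℂ) * Complex.I) * besselJ m x ^ 2)
      = (1/(4*(n:ℂ))) * (∑ ℓ ∈ Finset.range (2*n), ((-1:ℂ))^ℓ * Complex.exp ((m:ℂ) * ((π * ℓ / n : ℝ):ℂ) * Complex.I)) * besselJ m x ^ 2 := by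
    simp only [Finset.mul_sum, Finset.sum_mul]
    apply Finset.sum_congr rfl
    intro ℓ _
    ring
  rw [this, sieve_coeff n hn m]
  by_cases hdvd : (2*(n:ℤ)) ∣ (m + n)
  · simp only [if_pos hdvd]
    field_simp
    ring
  · simp [if_neg hdvd]

lemma besselJ_sq_neg (m : ℤ) (x : ℂ) : besselJ (-m) x ^ 2 = besselJ m x ^ 2 := by
  rw [besselJ_neg, mul_pow]
  have h1 : ((-1:ℂ)^m)^2 = 1 := by
    rw [sq, ← mul_zpow]
    norm_num
  rw [h1, one_mul]

lemma hasSum_odd (n : ℕ) (hn : 1 ≤ n) (x : ℝ) :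
    HasSum (fun j : ℤ => (1/2 : ℂ) * besselJ (2*(n:ℤ)*j - n) x ^ 2)
      (∑ ℓ ∈ Finset.range (2*n), ((-1:ℂ))^ℓ/(4*(n:ℂ)) * besselJ 0 ((2 * x * Real.sin ((π * ℓ / n)/2) : ℝ):ℂ)) := by
  have h := hasSum_sieve n hn x
  have hinj : Function.Injective (fun j : ℤ => 2*(n:ℤ)*j - n) := by
    intro a b hab
    simp only at hab
    have h2n : (2*(n:ℤ)) ≠ 0 := by omega
    have : 2*(n:ℤ)*a = 2*(n:ℤ)*b := by omega
    exact mul_left_cancel₀ h2n this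
  have hzero : ∀ m ∉ Set.range (fun j : ℤ => 2*(n:ℤ)*j - n),
      (if (2*(n:ℤ)) ∣ (m + n) then (1/2 : ℂ) else 0) * besselJ m x ^ 2 = 0 := by
    intro m hm
    have : ¬ (2*(n:ℤ)) ∣ (m + n) := by
      intro ⟨k, hk⟩
      exact hm ⟨k, by show 2*(n:ℤ)*k - n = m; linarith⟩
    rw [if_neg this, zero_mul]
  have := (Function.Injective.hasSum_iff hinj hzero).mpr h
  apply this.congr_fun
  intro j
  simp only [Function.comp]
  rw [if_pos ⟨j, by ring⟩]

lemma rhs_split (n : ℕ) (hn : 1 ≤ n) (x : ℝ) :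
    ∑ ℓ ∈ Finset.range (2*n), ((-1:ℂ))^ℓ/(4*(n:ℂ)) * besselJ 0 ((2 * x * Real.sin ((π * ℓ / n)/2) : ℝ):ℂ)
      = 1 / (4 * (n:ℂ)) + ((-1 : ℂ) ^ n / (4 * (n:ℂ))) * besselJ 0 ((2 * x : ℝ) : ℂ) +
        (1 / (2 * (n:ℂ))) * ∑ ℓ ∈ Finset.Ico 1 n,
          (-1 : ℂ) ^ ℓ * besselJ 0 ((2 * x * Real.sin (π * ℓ / (2 * n)) : ℝ) : ℂ) := by
  have hn0 : (n:ℂ) ≠ 0 := Nat.cast_ne_zero.mpr (by omega)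
  have hnR : (n:ℝ) ≠ 0 := Nat.cast_ne_zero.mpr (by omega)
  set f : ℕ → ℂ := fun ℓ => ((-1:ℂ))^ℓ/(4*(n:ℂ)) * besselJ 0 ((2 * x * Real.sin ((π * ℓ / n)/2) : ℝ):ℂ) with hf
  -- the sine arguments agree
  have harg : ∀ ℓ : ℕ, ((π * ℓ / n)/2 : ℝ) = π * ℓ / (2*n) := by
    intro ℓ; rw [div_div, mul_comm (n:ℝ) 2]
  -- split the sum
  have h0 : Finset.range (2*n) = Finset.Ico 0 (2*n) := by rw [Finset.range_eq_Ico]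
  have hsplit1 : ∑ ℓ ∈ Finset.range (2*n), f ℓ
      = f 0 + ∑ ℓ ∈ Finset.Ico 1 (2*n), f ℓ := by
    rw [h0, Finset.sum_eq_sum_Ico_succ_bot (by omega)]
  have hsplit2 : ∑ ℓ ∈ Finset.Ico 1 (2*n), f ℓ
      = ∑ ℓ ∈ Finset.Ico 1 n, f ℓ + ∑ ℓ ∈ Finset.Ico n (2*n), f ℓ := by
    rw [Finset.sum_Ico_consecutive _ (by omega) (by omega)]
  have hsplit3 : ∑ ℓ ∈ Finset.Ico n (2*n), f ℓ
      = f n + ∑ ℓ ∈ Finset.Ico (n+1) (2*n), f ℓ := by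
    rw [Finset.sum_eq_sum_Ico_succ_bot (by omega)]
  -- reflection
  have hrefl : ∑ ℓ ∈ Finset.Ico (n+1) (2*n), f ℓ = ∑ ℓ ∈ Finset.Ico 1 n, f ℓ := by
    apply Finset.sum_nbij' (fun ℓ => 2*n - ℓ) (fun ℓ => 2*n - ℓ)
    · intro a ha
      simp only [Finset.mem_Ico] at ha ⊢
      omega
    · intro a ha
      simp only [Finset.mem_Ico] at ha ⊢
      omega
    · intro a ha
      simp only [Finset.mem_Ico] at ha
      omega
    · intro a ha
      simp only [Finset.mem_Ico] at ha
      omega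
    · intro ℓ hℓ
      simp only [Finset.mem_Ico] at hℓ
      rw [hf]
      simp only
      have hle : ℓ ≤ 2*n := by omega
      have hsign : (-1:ℂ)^(2*n-ℓ) = (-1:ℂ)^ℓ := by
        have h1 : (-1:ℂ)^(2*n-ℓ) * (-1:ℂ)^ℓ = 1 := by
          rw [← pow_add, show 2*n-ℓ+ℓ = 2*n by omega, pow_mul]
          norm_num
        have hb : (-1:ℂ)^ℓ * (-1:ℂ)^ℓ = 1 := by
          rw [← pow_add, ← two_mul, pow_mul]
          norm_num
        linear_combination ((-1:ℂ)^ℓ) * h1 - ((-1:ℂ)^(2*n-ℓ)) * hb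
      have hsin : Real.sin ((π * ((2*n - ℓ : ℕ):ℝ) / n)/2) = Real.sin ((π * ℓ / n)/2) := by
        have hcast : ((2*n - ℓ : ℕ):ℝ) = 2*(n:ℝ) - ℓ := by
          push_cast [hle]
          ring
        rw [hcast, show (π * (2*(n:ℝ) - ℓ) / n)/2 = π - (π * ℓ / n)/2 by field_simp, Real.sin_pi_sub]
      rw [hsign, hsin]
  -- evaluate f 0 and f n
  have hf0 : f 0 = 1 / (4 * (n:ℂ)) := by
    rw [hf]
    simp only [pow_zero, Nat.cast_zero]
    rw [show (π * (0:ℝ) / n)/2 = (0:ℝ) by ring]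
    simp only [Real.sin_zero, mul_zero, Complex.ofReal_zero, besselJ_zero_zero]
    ring
  have hfn : f n = ((-1 : ℂ) ^ n / (4 * (n:ℂ))) * besselJ 0 ((2 * x : ℝ) : ℂ) := by
    rw [hf]
    simp only
    rw [show (π * (n:ℝ) / n)/2 = π/2 by field_simp, Real.sin_pi_div_two]
    push_cast
    ring
  rw [hsplit1, hsplit2, hsplit3, hrefl, hf0, hfn]
  have hsum14 : ∑ ℓ ∈ Finset.Ico 1 n, f ℓ
      = (1/(4*(n:ℂ))) * ∑ ℓ ∈ Finset.Ico 1 n,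
          (-1 : ℂ) ^ ℓ * besselJ 0 ((2 * x * Real.sin (π * ℓ / (2 * n)) : ℝ) : ℂ) := by
    rw [Finset.mul_sum]
    apply Finset.sum_congr rfl
    intro ℓ _
    rw [hf]
    simp only
    rw [harg ℓ]
    ring
  rw [hsum14]
  field_simp
  ring

theorem statement15 (n : ℕ) (hn : 1 ≤ n) (x : ℝ) :
    (∑' k : ℕ, besselJ ((2 * k + 1) * n) x ^ 2) =
      1 / (4 * (n:ℂ)) + ((-1 : ℂ) ^ n / (4 * (n:ℂ))) * besselJ 0 ((2 * x : ℝ) : ℂ) +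
        (1 / (2 * (n:ℂ))) * ∑ ℓ ∈ Finset.Ico 1 n,
          (-1 : ℂ) ^ ℓ * besselJ 0 ((2 * x * Real.sin (π * ℓ / (2 * n)) : ℝ) : ℂ) := by
  classical
  have hh := hasSum_odd n hn x
  set S := ∑ ℓ ∈ Finset.range (2*n), ((-1:ℂ))^ℓ/(4*(n:ℂ)) * besselJ 0 ((2 * x * Real.sin ((π * ℓ / n)/2) : ℝ):ℂ) with hS
  set h : ℤ → ℂ := fun j => (1/2 : ℂ) * besselJ (2*(n:ℤ)*j - n) x ^ 2 with hhdef
  have hswap : ∀ j : ℤ, h (-j) = h (j+1) := by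
    intro j
    rw [hhdef]
    simp only
    rw [show 2*(n:ℤ)*(-j) - n = -(2*(n:ℤ)*(j+1) - n) by ring, besselJ_sq_neg]
  have hs1 : Summable ((fun j : ℤ => h j) ∘ (fun k : ℕ => (k:ℤ)+1)) :=
    hh.summable.comp_injective (fun a b hab => by omega)
  obtain ⟨t, ht⟩ := hs1
  have ht : HasSum (fun k : ℕ => h ((k:ℤ)+1)) t := ht
  have hs0 : Summable ((fun j : ℤ => h j) ∘ (fun k : ℕ => (k:ℤ))) :=
    hh.summable.comp_injective (fun a b hab => by omega)
  obtain ⟨s0, hs0'⟩ := hs0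
  have hs0' : HasSum (fun k : ℕ => h (k:ℤ)) s0 := hs0'
  have hrel1 : s0 = t + h 0 := by
    have ht' : HasSum (fun k : ℕ => h (((k+1 : ℕ)) : ℤ)) t :=
      ht.congr_fun (fun k => by norm_num)
    have h2 := (hasSum_nat_add_iff (f := fun k : ℕ => h (k:ℤ)) 1).mp ht'
    simp only [Finset.range_one, Finset.sum_singleton, Nat.cast_zero] at h2
    exact hs0'.unique h2
  have hpair : HasSum (fun k : ℕ => h (k:ℤ) + h (-(k:ℤ))) (S + h 0) := hh.nat_add_neg
  have hpair' : HasSum (fun k : ℕ => h (k:ℤ) + h (-(k:ℤ))) (s0 + t) :=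
    (hs0'.add ht).congr_fun (fun k => by rw [hswap (k:ℤ)])
  have hkey : S = 2*t := by
    have huniq := hpair.unique hpair'
    rw [hrel1] at huniq
    linear_combination huniq
  have hfinal : HasSum (fun k : ℕ => besselJ ((2 * (k:ℤ) + 1) * (n:ℤ)) x ^ 2) S := by
    rw [hkey]
    exact (ht.mul_left 2).congr_fun (fun k => by
      rw [hhdef]
      simp only
      rw [show 2*(n:ℤ)*((k:ℤ)+1) - n = (2*(k:ℤ)+1)*(n:ℤ) by ring]
      ring)
  rw [hfinal.tsum_eq, hS]
  exact rhs_split n hn x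
end

section
/- For every integer n ≥ 1, integers p and q, real t, and real z: Σ_{k∈ℤ} J_{p+kn}(z)·J_{q−kn}(z)·e^{2iknt} = (1/n)·Σ_{ℓ=0}^{n-1} e^{−i(p−q)(t+πℓ/n)}·J_{p+q}(2z·cos(t+πℓ/n)). -/
open scoped Real
open Complex MeasureTheory intervalIntegral Function Set

namespace BesselAux

instance : Fact (0 < 2 * Real.pi) := ⟨by positivity⟩

noncomputable def fc (f : ℝ → ℂ) (n : ℤ) : ℂ :=
  (1 / (2 * Real.pi)) * ∫ θ in (0:ℝ)..(2 * Real.pi),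
    Complex.exp (-(n:ℂ) * (θ:ℂ) * Complex.I) * f θ

lemma fc_def (f : ℝ → ℂ) (n : ℤ) : fc f n =
  (1 / (2 * Real.pi)) * ∫ θ in (0:ℝ)..(2 * Real.pi),
    Complex.exp (-(n:ℂ) * (θ:ℂ) * Complex.I) * f θ := rfl

lemma fc_eq_fourierCoeffOn (f : ℝ → ℂ) (n : ℤ) :
    fc f n = fourierCoeffOn Real.two_pi_pos f n := by
  rw [fourierCoeffOn_eq_integral, fc]
  rw [sub_zero, Complex.real_smul]
  push_cast
  congr 1
  refine intervalIntegral.integral_congr fun x hx => ?_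
  rw [fourier_coe_apply, smul_eq_mul]
  congr 2
  push_cast
  have hπ : (Real.pi : ℂ) ≠ 0 := Complex.ofReal_ne_zero.mpr Real.pi_ne_zero
  field_simp

lemma fc_eq_fourierCoeff {f : ℝ → ℂ} (hper : Function.Periodic f (2 * Real.pi)) (n : ℤ) :
    fourierCoeff (hper.lift) n = fc f n := by
  rw [fourierCoeff_eq_intervalIntegral _ n 0, fc, zero_add, Complex.real_smul]
  push_cast
  congr 1
  refine intervalIntegral.integral_congr fun x hx => ?_
  rw [Function.Periodic.lift_coe, fourier_coe_apply, smul_eq_mul]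
  congr 2
  push_cast
  have hπ : (Real.pi : ℂ) ≠ 0 := Complex.ofReal_ne_zero.mpr Real.pi_ne_zero
  field_simp


lemma fc_of_deriv {f f' : ℝ → ℂ} (hper : Function.Periodic f (2 * Real.pi))
    (hderiv : ∀ x, HasDerivAt f (f' x) x) (hcont' : Continuous f')
    {n : ℤ} (hn : n ≠ 0) :
    fc f n = (-Complex.I / (n:ℂ)) * fc f' n := by
  rw [fc_eq_fourierCoeffOn, fc_eq_fourierCoeffOn,
    fourierCoeffOn_of_hasDerivAt Real.two_pi_pos hn (fun x _ => hderiv x)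
      (hcont'.intervalIntegrable _ _)]
  have h0 : f (2 * Real.pi) = f 0 := by simpa using hper 0
  rw [h0, sub_self, mul_zero, zero_sub]
  have hπ : (Real.pi : ℂ) ≠ 0 := Complex.ofReal_ne_zero.mpr Real.pi_ne_zero
  have hn' : (n : ℂ) ≠ 0 := Int.cast_ne_zero.mpr hn
  have hI : Complex.I ≠ 0 := Complex.I_ne_zero
  push_cast
  field_simp
  ring_nf
  rw [Complex.I_sq]
  ring

lemma norm_exp_neg_int_mul_I (n : ℤ) (x : ℝ) :
    ‖Complex.exp (-(n:ℂ) * (x:ℂ) * Complex.I)‖ = 1 := by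
  rw [Complex.norm_exp]
  simp [Complex.mul_re, Complex.mul_im]

lemma fc_norm_le {f : ℝ → ℂ} {C : ℝ} (hC : 0 ≤ C)
    (hbound : ∀ x, ‖f x‖ ≤ C) (hcont : Continuous f) (n : ℤ) :
    ‖fc f n‖ ≤ C := by
  rw [fc_def, norm_mul]
  have h1 : ‖∫ θ in (0:ℝ)..(2 * Real.pi),
      Complex.exp (-(n:ℂ) * (θ:ℂ) * Complex.I) * f θ‖ ≤ C * |2 * Real.pi - 0| := by
    apply intervalIntegral.norm_integral_le_of_norm_le_const
    intro x _
    rw [norm_mul, norm_exp_neg_int_mul_I, one_mul]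
    exact hbound x
  have h2 : ‖(1 : ℂ) / (2 * (Real.pi:ℂ))‖ = 1 / (2 * Real.pi) := by
    rw [norm_div, norm_one, norm_mul]
    simp [Real.pi_pos.le, abs_of_pos Real.pi_pos]
  calc ‖(1 : ℂ) / (2 * (Real.pi:ℂ))‖ * ‖_‖ ≤ (1 / (2*Real.pi)) * (C * |2*Real.pi - 0|) := by
        rw [h2]
        apply mul_le_mul_of_nonneg_left h1 (by positivity)
    _ = C := by
        rw [sub_zero, abs_of_pos Real.two_pi_pos]
        field_simp

lemma summable_norm_fc {f f' f'' : ℝ → ℂ} {D : ℝ} (hD0 : 0 ≤ D)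
    (hper : Function.Periodic f (2 * Real.pi))
    (hper' : Function.Periodic f' (2 * Real.pi))
    (hd : ∀ x, HasDerivAt f (f' x) x) (hd' : ∀ x, HasDerivAt f' (f'' x) x)
    (hcont'' : Continuous f'') (hbound : ∀ x : ℝ, ‖f'' x‖ ≤ D) :
    Summable (fun n : ℤ => ‖fc f n‖) := by
  have hcont' : Continuous f' :=
    continuous_iff_continuousAt.mpr fun x => (hd' x).continuousAt
  have key : ∀ n : ℤ, n ≠ 0 → ‖fc f n‖ ≤ D * (1 / (n:ℝ)^2) := by
    intro n hn
    rw [fc_of_deriv hper hd hcont' hn, fc_of_deriv hper' hd' hcont'' hn]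
    have hnormI : ‖-Complex.I / (n:ℂ)‖ = 1 / |(n:ℝ)| := by
      rw [norm_div, norm_neg, Complex.norm_I]
      congr 1
      rw [show ((n:ℂ)) = (((n:ℝ)):ℂ) by push_cast; ring, Complex.norm_real,
        Real.norm_eq_abs]
    have hfc : ‖fc f'' n‖ ≤ D := fc_norm_le hD0 hbound hcont'' n
    rw [norm_mul, norm_mul, hnormI, ← mul_assoc,
      show (1/|(n:ℝ)|) * (1/|(n:ℝ)|) = 1/(n:ℝ)^2 by
        rw [div_mul_div_comm, one_mul, ← sq, _root_.sq_abs ((n:ℝ))],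
      mul_comm D _]
    gcongr
  refine Summable.of_norm_bounded_eventually (g := fun n : ℤ => D * (1/(n:ℝ)^2))
    ((Real.summable_one_div_int_pow.mpr one_lt_two).mul_left D) ?_
  rw [Filter.eventually_cofinite]
  refine Set.Finite.subset (Set.finite_singleton (0:ℤ)) ?_
  intro n hn
  simp only [Set.mem_setOf_eq, norm_norm] at hn
  by_contra h0
  exact hn (key n (by simpa using h0))

lemma hasSum_fc {f : ℝ → ℂ} (hper : Function.Periodic f (2 * Real.pi)) (hcont : Continuous f)
    (hsum : Summable fun n : ℤ => ‖fc f n‖) (θ : ℝ) :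
    HasSum (fun n : ℤ => fc f n * Complex.exp ((n:ℂ) * (θ:ℂ) * Complex.I)) (f θ) := by
  set F : C(AddCircle (2 * Real.pi), ℂ) := ⟨hper.lift, continuous_coinduced_dom.mpr hcont⟩
  have hFc : ∀ n, fourierCoeff (F : AddCircle (2 * Real.pi) → ℂ) n = fc f n := fun n =>
    fc_eq_fourierCoeff hper n
  have hs : Summable (fourierCoeff (F : AddCircle (2 * Real.pi) → ℂ)) := by
    rw [funext hFc]; exact hsum.of_norm
  have H := has_pointwise_sum_fourier_series_of_summable hs ((θ : ℝ) : AddCircle (2 * Real.pi))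
  have hFθ : F ((θ : ℝ) : AddCircle (2 * Real.pi)) = f θ := hper.lift_coe θ
  rw [hFθ] at H
  refine H.congr_fun fun n => ?_
  rw [hFc, smul_eq_mul]
  congr 1
  rw [fourier_coe_apply]
  congr 1
  push_cast
  have hπ : (Real.pi : ℂ) ≠ 0 := Complex.ofReal_ne_zero.mpr Real.pi_ne_zero
  field_simp

lemma norm_exp_int_mul_I (n : ℤ) (x : ℝ) :
    ‖Complex.exp ((n:ℂ) * (x:ℂ) * Complex.I)‖ = 1 := by
  have := norm_exp_neg_int_mul_I (-n) x
  rw [show (-(-n:ℤ):ℂ) = (n:ℂ) by push_cast; ring] at this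
  exact this

lemma fc_mul_eq {g h : ℝ → ℂ} (hgp : Function.Periodic g (2 * Real.pi)) (hgc : Continuous g)
    (hgs : Summable fun n : ℤ => ‖fc g n‖) (hhc : Continuous h) (N : ℤ) :
    fc (fun θ => h θ * g θ) N = ∑' j : ℤ, fc g j * fc h (N - j) := by
  have hπ : (Real.pi : ℂ) ≠ 0 := Complex.ofReal_ne_zero.mpr Real.pi_ne_zero
  set φ : ℤ → C(ℝ, ℂ) := fun j =>
    ⟨fun θ => Complex.exp (-(N:ℂ) * (θ:ℂ) * Complex.I) * h θ *
      (fc g j * Complex.exp ((j:ℂ) * (θ:ℂ) * Complex.I)), by fun_prop⟩ with hφ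
  -- pointwise expansion
  have hpt : ∀ θ : ℝ, Complex.exp (-(N:ℂ) * (θ:ℂ) * Complex.I) * ((fun θ => h θ * g θ) θ) =
      ∑' j : ℤ, φ j θ := by
    intro θ
    have H := ((hasSum_fc hgp hgc hgs θ).mul_left
      (Complex.exp (-(N:ℂ) * (θ:ℂ) * Complex.I) * h θ)).tsum_eq
    simp only [hφ, ContinuousMap.coe_mk]
    rw [H]
    ring
  -- summability of sup norms
  obtain ⟨C, hC⟩ : ∃ C : ℝ, ∀ x ∈ uIcc (0:ℝ) (2*Real.pi), ‖h x‖ ≤ C :=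
    isCompact_uIcc.exists_bound_of_continuousOn hhc.continuousOn
  set D := max C 0 with hD
  have hsum_norm : Summable fun j : ℤ =>
      ‖(φ j).restrict (⟨uIcc (0:ℝ) (2*Real.pi), isCompact_uIcc⟩ : TopologicalSpace.Compacts ℝ)‖ := by
    refine Summable.of_norm_bounded (g := fun j => ‖fc g j‖ * D) (hgs.mul_right D) fun j => ?_
    rw [norm_norm]
    refine ContinuousMap.norm_le _ (by positivity) |>.mpr fun x => ?_
    rw [ContinuousMap.restrict_apply]
    calc ‖φ j x.1‖ = ‖h x.1‖ * ‖fc g j‖ := by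
          simp only [hφ, ContinuousMap.coe_mk, norm_mul, norm_exp_neg_int_mul_I,
            norm_exp_int_mul_I, one_mul, mul_one]
      _ ≤ ‖fc g j‖ * D := by
          rw [mul_comm]
          have := hC x.1 x.2
          have h2 : ‖h x.1‖ ≤ D := le_trans this (le_max_left _ _)
          exact mul_le_mul_of_nonneg_left h2 (norm_nonneg _)
  -- swap
  have hswap := tsum_intervalIntegral_eq_of_summable_norm (a := 0) (b := 2*Real.pi) hsum_norm
  -- evaluate each integral
  have heval : ∀ j : ℤ, (∫ x in (0:ℝ)..(2*Real.pi), φ j x) =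
      fc g j * ((2*Real.pi) * fc h (N - j)) := by
    intro j
    have h1 : ∀ x : ℝ, φ j x = fc g j * (Complex.exp (-((N-j:ℤ):ℂ) * (x:ℂ) * Complex.I) * h x) := by
      intro x
      simp only [hφ, ContinuousMap.coe_mk]
      rw [show Complex.exp (-(N:ℂ) * (x:ℂ) * Complex.I) * h x *
          (fc g j * Complex.exp ((j:ℂ) * (x:ℂ) * Complex.I)) =
          fc g j * ((Complex.exp (-(N:ℂ) * (x:ℂ) * Complex.I) *
            Complex.exp ((j:ℂ) * (x:ℂ) * Complex.I)) * h x) by ring, ← Complex.exp_add]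
      congr 3
      push_cast
      ring
    rw [intervalIntegral.integral_congr fun x _ => h1 x, intervalIntegral.integral_const_mul]
    congr 1
    rw [fc_def]
    rw [← mul_assoc]
    rw [show (2*(Real.pi:ℂ)) * ((1:ℂ) / (2*Real.pi)) = 1 by field_simp, one_mul]
  -- put together
  rw [fc_def]
  rw [intervalIntegral.integral_congr fun θ _ => hpt θ]
  rw [← hswap]
  rw [← tsum_mul_left]
  refine tsum_congr fun j => ?_
  rw [heval j]
  push_cast
  field_simp

/-- the generating function θ ↦ exp(i c sin θ) for real c -/
noncomputable def gfun (c : ℝ) (θ : ℝ) : ℂ :=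
  Complex.exp ((c:ℂ) * Complex.sin (θ:ℂ) * Complex.I)

lemma gfun_continuous (c : ℝ) : Continuous (gfun c) := by unfold gfun; fun_prop

lemma gfun_periodic (c : ℝ) : Function.Periodic (gfun c) (2 * Real.pi) := by
  intro x
  unfold gfun
  congr 1
  push_cast
  rw [Complex.sin_add_two_pi]

lemma besselJ_eq_fc (m : ℤ) (c : ℝ) : besselJ m (c:ℂ) = fc (gfun c) m := by
  rw [besselJ, fc_def]
  congr 1
  refine intervalIntegral.integral_congr fun x _ => ?_
  rw [gfun, ← Complex.exp_add]
  congr 1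
  ring

lemma exp_periodic_int (n : ℤ) : Function.Periodic
    (fun u : ℝ => Complex.exp (-(n:ℂ) * (u:ℂ) * Complex.I)) (2 * Real.pi) := by
  intro x
  simp only []
  rw [show (-(n:ℂ) * ((x + 2*Real.pi : ℝ):ℂ) * Complex.I) =
      -(n:ℂ) * (x:ℂ) * Complex.I + (-n:ℤ) * (2 * (Real.pi:ℂ) * Complex.I) by push_cast; ring,
    Complex.exp_add, Complex.exp_int_mul_two_pi_mul_I, mul_one]

lemma fc_shift {f : ℝ → ℂ} (hper : Function.Periodic f (2 * Real.pi)) (a : ℝ) (n : ℤ) :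
    fc (fun θ => f (θ + a)) n = Complex.exp ((n:ℂ) * (a:ℂ) * Complex.I) * fc f n := by
  rw [fc_def, fc_def]
  set H : ℝ → ℂ := fun u => Complex.exp ((n:ℂ) * (a:ℂ) * Complex.I) *
    (Complex.exp (-(n:ℂ) * (u:ℂ) * Complex.I) * f u) with hH
  have h1 : ∀ θ : ℝ, Complex.exp (-(n:ℂ) * (θ:ℂ) * Complex.I) * f (θ + a) = H (θ + a) := by
    intro θ
    rw [hH]
    simp only []
    rw [← mul_assoc, ← Complex.exp_add]
    congr 2
    push_cast
    ring
  rw [intervalIntegral.integral_congr fun θ _ => h1 θ,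
    intervalIntegral.integral_comp_add_right H a]
  have hHper : Function.Periodic H (2 * Real.pi) := by
    intro x
    rw [hH]
    simp only []
    rw [hper x]
    congr 2
    exact exp_periodic_int n x
  have := hHper.intervalIntegral_add_eq a 0
  rw [zero_add] at this
  rw [show (0:ℝ) + a = a by ring, show 2*Real.pi + a = a + 2*Real.pi by ring, this]
  rw [hH]
  simp only []
  rw [intervalIntegral.integral_const_mul]
  ring

noncomputable def gfun' (c : ℝ) (θ : ℝ) : ℂ :=
  ((c:ℂ) * Complex.cos (θ:ℂ) * Complex.I) * gfun c θ

noncomputable def gfun'' (c : ℝ) (θ : ℝ) : ℂ :=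
  (-(c:ℂ) * Complex.sin (θ:ℂ) * Complex.I) * gfun c θ +
    ((c:ℂ) * Complex.cos (θ:ℂ) * Complex.I) * gfun' c θ

lemma hasDerivAt_inner (c : ℝ) (θ : ℝ) :
    HasDerivAt (fun x : ℝ => (c:ℂ) * Complex.sin (x:ℂ) * Complex.I)
      ((c:ℂ) * Complex.cos (θ:ℂ) * Complex.I) θ := by
  have h1 : HasDerivAt (fun x : ℝ => Complex.sin (x:ℂ)) (Complex.cos (θ:ℂ)) θ :=
    (Complex.hasDerivAt_sin (θ:ℂ)).comp_ofReal
  have h2 := (h1.const_mul ((c:ℂ))).mul_const Complex.I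
  simpa [mul_comm, mul_assoc] using h2

lemma hasDerivAt_gfun (c : ℝ) (θ : ℝ) : HasDerivAt (gfun c) (gfun' c θ) θ := by
  have h := (hasDerivAt_inner c θ).cexp
  show HasDerivAt (fun x : ℝ => Complex.exp ((c:ℂ) * Complex.sin (x:ℂ) * Complex.I)) (gfun' c θ) θ
  convert h using 1
  rw [gfun', gfun]
  ring

lemma hasDerivAt_gfun' (c : ℝ) (θ : ℝ) : HasDerivAt (gfun' c) (gfun'' c θ) θ := by
  have hcos : HasDerivAt (fun x : ℝ => (c:ℂ) * Complex.cos (x:ℂ) * Complex.I)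
      (-(c:ℂ) * Complex.sin (θ:ℂ) * Complex.I) θ := by
    have h1 : HasDerivAt (fun x : ℝ => Complex.cos (x:ℂ)) (-Complex.sin (θ:ℂ)) θ :=
      (Complex.hasDerivAt_cos (θ:ℂ)).comp_ofReal
    have h2 := (h1.const_mul ((c:ℂ))).mul_const Complex.I
    simpa [mul_comm, mul_assoc, mul_neg, neg_mul] using h2
  have := hcos.mul (hasDerivAt_gfun c θ)
  rw [gfun'']
  simp at this ⊢; exact this

lemma gfun'_periodic (c : ℝ) : Function.Periodic (gfun' c) (2 * Real.pi) := by
  intro x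
  unfold gfun'
  rw [gfun_periodic c x]
  congr 2
  push_cast
  rw [Complex.cos_add_two_pi]

lemma gfun''_continuous (c : ℝ) : Continuous (gfun'' c) := by
  unfold gfun'' gfun' gfun; fun_prop

lemma norm_gfun (c θ : ℝ) : ‖gfun c θ‖ = 1 := by
  rw [gfun, Complex.norm_exp]
  rw [← Complex.ofReal_sin]
  simp [Complex.mul_re, Complex.mul_im]

lemma gfun''_bound (c θ : ℝ) : ‖gfun'' c θ‖ ≤ |c| + |c| * |c| := by
  rw [gfun'', gfun']
  refine le_trans (norm_add_le _ _) ?_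
  simp only [norm_mul, norm_neg, Complex.norm_I, mul_one, norm_gfun]
  have hs : ‖Complex.sin ((θ:ℝ):ℂ)‖ ≤ 1 := by
    rw [← Complex.ofReal_sin, Complex.norm_real, Real.norm_eq_abs]
    exact abs_le_one_iff_mul_self_le_one.mpr (by nlinarith [Real.sin_sq_le_one θ])
  have hc : ‖Complex.cos ((θ:ℝ):ℂ)‖ ≤ 1 := by
    rw [← Complex.ofReal_cos, Complex.norm_real, Real.norm_eq_abs]
    exact abs_le_one_iff_mul_self_le_one.mpr (by nlinarith [Real.cos_sq_le_one θ])
  have hcn : ‖((c:ℝ):ℂ)‖ = |c| := by rw [Complex.norm_real, Real.norm_eq_abs]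
  rw [hcn]
  have h0 : (0:ℝ) ≤ |c| := abs_nonneg c
  have h1 : |c| * ‖Complex.sin ((θ:ℝ):ℂ)‖ ≤ |c| * 1 := mul_le_mul_of_nonneg_left hs h0
  have hk : |c| * ‖Complex.cos ((θ:ℝ):ℂ)‖ ≤ |c| := by
    calc |c| * ‖Complex.cos ((θ:ℝ):ℂ)‖ ≤ |c| * 1 := mul_le_mul_of_nonneg_left hc h0
      _ = |c| := mul_one _
  have hk0 : 0 ≤ |c| * ‖Complex.cos ((θ:ℝ):ℂ)‖ := mul_nonneg h0 (norm_nonneg _)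
  have h2 := mul_le_mul hk hk hk0 h0
  linarith

lemma summable_norm_besselJ (c : ℝ) : Summable (fun m : ℤ => ‖besselJ m (c:ℂ)‖) := by
  have h := summable_norm_fc (f := gfun c) (f' := gfun' c) (f'' := gfun'' c)
    (D := |c| + |c| * |c|) (by positivity) (gfun_periodic c) (gfun'_periodic c)
    (hasDerivAt_gfun c) (hasDerivAt_gfun' c) (gfun''_continuous c) (gfun''_bound c)
  refine h.congr fun m => ?_
  rw [besselJ_eq_fc]

lemma norm_besselJ_le_one (m : ℤ) (c : ℝ) : ‖besselJ m (c:ℂ)‖ ≤ 1 := by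
  rw [besselJ, norm_mul]
  have h1 : ‖∫ θ in (0:ℝ)..(2 * Real.pi), Complex.exp ((c:ℂ) * Complex.sin (θ:ℂ) * Complex.I
      - (m:ℂ) * (θ:ℂ) * Complex.I)‖ ≤ 1 * |2 * Real.pi - 0| := by
    apply intervalIntegral.norm_integral_le_of_norm_le_const
    intro x _
    rw [Complex.norm_exp]
    rw [← Complex.ofReal_sin]
    simp [Complex.sub_re, Complex.mul_re, Complex.mul_im]
  have h2 : ‖(1 : ℂ) / (2 * (Real.pi:ℂ))‖ = 1 / (2 * Real.pi) := by
    rw [norm_div, norm_one, norm_mul]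
    simp [abs_of_pos Real.pi_pos]
  rw [h2]
  calc (1 / (2*Real.pi)) * _ ≤ (1 / (2*Real.pi)) * (1 * |2*Real.pi - 0|) := by
        apply mul_le_mul_of_nonneg_left h1 (by positivity)
    _ = 1 := by
        rw [sub_zero, abs_of_pos Real.two_pi_pos]
        field_simp

lemma core (p q : ℤ) (z s : ℝ) :
    (∑' m : ℤ, besselJ (p+m) (z:ℂ) * besselJ (q-m) (z:ℂ) *
        Complex.exp (2*Complex.I*(m:ℂ)*(s:ℂ))) =
      Complex.exp (-Complex.I*((p:ℂ)-(q:ℂ))*(s:ℂ)) *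
        besselJ (p+q) ((2*z*Real.cos s : ℝ):ℂ) := by
  set N : ℤ := p + q with hN
  set w : ℝ := 2*z*Real.cos s with hw
  set h : ℝ → ℂ := fun θ => gfun z (θ + 2*s) with hh
  have hhp : Function.Periodic h (2 * Real.pi) := by
    intro x
    simp only [hh]
    rw [show x + 2*Real.pi + 2*s = (x + 2*s) + 2*Real.pi from by ring]
    exact gfun_periodic z (x+2*s)
  have hhc : Continuous h := (gfun_continuous z).comp (by continuity)
  have hgs : Summable fun n : ℤ => ‖fc (gfun z) n‖ :=
    (summable_norm_besselJ z).congr fun m => by rw [besselJ_eq_fc]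
  -- key3 : product is shifted gfun w
  have key3 : (fun θ => h θ * gfun z θ) = (fun θ => gfun w (θ + s)) := by
    funext θ
    simp only [hh]
    unfold gfun
    rw [← Complex.exp_add]
    congr 1
    push_cast [Complex.ofReal_cos]
    rw [show ((θ:ℂ) + 2*(s:ℂ)) = ((θ:ℂ)+(s:ℂ)) + (s:ℂ) from by ring, Complex.sin_add]
    rw [show Complex.sin (θ:ℂ) = Complex.sin (((θ:ℂ)+(s:ℂ)) - (s:ℂ)) from by
      rw [add_sub_cancel_right], Complex.sin_sub, hw]
    push_cast [Complex.ofReal_cos]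
    ring
  -- main identity
  have main : (∑' j : ℤ, besselJ j (z:ℂ) *
      (Complex.exp (((N-j:ℤ):ℂ) * ((2*s:ℝ):ℂ) * Complex.I) * besselJ (N-j) (z:ℂ))) =
      Complex.exp ((N:ℂ) * (s:ℂ) * Complex.I) * besselJ N (w:ℂ) := by
    have k1 := fc_mul_eq (gfun_periodic z) (gfun_continuous z) hgs hhc N
    have k2 : ∀ j : ℤ, fc h j = Complex.exp ((j:ℂ) * ((2*s:ℝ):ℂ) * Complex.I) * fc (gfun z) j :=
      fun j => fc_shift (gfun_periodic z) (2*s) j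
    have k4 : fc (fun θ => gfun w (θ + s)) N =
        Complex.exp ((N:ℂ) * (s:ℂ) * Complex.I) * fc (gfun w) N :=
      fc_shift (gfun_periodic w) s N
    calc (∑' j : ℤ, besselJ j (z:ℂ) *
          (Complex.exp (((N-j:ℤ):ℂ) * ((2*s:ℝ):ℂ) * Complex.I) * besselJ (N-j) (z:ℂ)))
        = ∑' j : ℤ, fc (gfun z) j * fc h (N - j) := by
          refine tsum_congr fun j => ?_
          rw [k2 (N-j), besselJ_eq_fc, besselJ_eq_fc]
      _ = fc (fun θ => h θ * gfun z θ) N := k1.symm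
      _ = fc (fun θ => gfun w (θ + s)) N := by rw [key3]
      _ = Complex.exp ((N:ℂ) * (s:ℂ) * Complex.I) * besselJ N (w:ℂ) := by
          rw [k4, besselJ_eq_fc]
  -- reindex j = q - m
  have reidx := (Equiv.subLeft q).tsum_eq (fun j : ℤ => besselJ j (z:ℂ) *
      (Complex.exp (((N-j:ℤ):ℂ) * ((2*s:ℝ):ℂ) * Complex.I) * besselJ (N-j) (z:ℂ)))
  rw [← reidx] at main
  simp only [Equiv.subLeft_apply] at main
  -- rewrite each term
  have hterm : ∀ m : ℤ, besselJ (q-m) (z:ℂ) *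
      (Complex.exp (((N-(q-m):ℤ):ℂ) * ((2*s:ℝ):ℂ) * Complex.I) * besselJ (N-(q-m)) (z:ℂ)) =
      Complex.exp (2*(p:ℂ)*(s:ℂ)*Complex.I) *
        (besselJ (p+m) (z:ℂ) * besselJ (q-m) (z:ℂ) * Complex.exp (2*Complex.I*(m:ℂ)*(s:ℂ))) := by
    intro m
    rw [show N-(q-m) = p+m from by rw [hN]; ring]
    rw [show Complex.exp (((p+m:ℤ):ℂ) * ((2*s:ℝ):ℂ) * Complex.I) =
        Complex.exp (2*(p:ℂ)*(s:ℂ)*Complex.I) * Complex.exp (2*Complex.I*(m:ℂ)*(s:ℂ)) from by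
      rw [← Complex.exp_add]; congr 1; push_cast; ring]
    ring
  rw [tsum_congr hterm, tsum_mul_left] at main
  -- cancel exp(2ps I)
  have hcancel : Complex.exp (2*(p:ℂ)*(s:ℂ)*Complex.I) *
      (Complex.exp (-Complex.I*((p:ℂ)-(q:ℂ))*(s:ℂ)) * besselJ (p+q) ((w:ℝ):ℂ)) =
      Complex.exp ((N:ℂ) * (s:ℂ) * Complex.I) * besselJ N (w:ℂ) := by
    rw [hN, ← mul_assoc, ← Complex.exp_add]
    congr 2
    push_cast
    ring
  have := main.trans hcancel.symm
  exact mul_left_cancel₀ (Complex.exp_ne_zero _) this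

lemma norm_exp_two_I (m : ℤ) (s : ℝ) : ‖Complex.exp (2*Complex.I*(m:ℂ)*(s:ℂ))‖ = 1 := by
  rw [show (2*Complex.I*(m:ℂ)*(s:ℂ)) = ((2*m*s : ℝ):ℂ) * Complex.I from by push_cast; ring]
  rw [Complex.norm_exp]
  simp [Complex.mul_re]

lemma summable_B (p q : ℤ) (z s : ℝ) :
    Summable (fun m : ℤ => besselJ (p+m) (z:ℂ) * besselJ (q-m) (z:ℂ) *
      Complex.exp (2*Complex.I*(m:ℂ)*(s:ℂ))) := by
  have h1 : Summable (fun m : ℤ => ‖besselJ (p+m) (z:ℂ)‖) :=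
    (summable_norm_besselJ z).comp_injective (add_right_injective p)
  refine Summable.of_norm_bounded h1 fun m => ?_
  rw [norm_mul, norm_mul, norm_exp_two_I, mul_one]
  calc ‖besselJ (p+m) (z:ℂ)‖ * ‖besselJ (q-m) (z:ℂ)‖
      ≤ ‖besselJ (p+m) (z:ℂ)‖ * 1 :=
        mul_le_mul_of_nonneg_left (norm_besselJ_le_one _ _) (norm_nonneg _)
    _ = ‖besselJ (p+m) (z:ℂ)‖ := mul_one _

end BesselAux

open BesselAux in
theorem statement16 (n : ℤ) (hn : 1 ≤ n) (p q : ℤ) (t z : ℝ) :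
    (∑' k : ℤ, besselJ (p + k * n) z * besselJ (q - k * n) z *
        Complex.exp (2 * Complex.I * (k:ℂ) * (n:ℂ) * (t:ℂ))) =
      (1 / (n:ℂ)) * ∑ ℓ ∈ Finset.range n.toNat,
        Complex.exp (-Complex.I * ((p:ℂ) - (q:ℂ)) * ((t + π * ℓ / n : ℝ) : ℂ)) *
          besselJ (p + q) ((2 * z * Real.cos (t + π * ℓ / n) : ℝ) : ℂ) := by
  have hnne : n ≠ 0 := by omega
  have hn0 : (n:ℂ) ≠ 0 := Int.cast_ne_zero.mpr hnne
  have hnR : (n:ℝ) ≠ 0 := Int.cast_ne_zero.mpr hnne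
  set B : ℕ → ℤ → ℂ := fun ℓ m => besselJ (p+m) (z:ℂ) * besselJ (q-m) (z:ℂ) *
      Complex.exp (2*Complex.I*(m:ℂ)*(((t + π * ℓ / n : ℝ)):ℂ)) with hB
  set A : ℤ → ℂ := fun m => besselJ (p+m) (z:ℂ) * besselJ (q-m) (z:ℂ) *
      Complex.exp (2*Complex.I*(m:ℂ)*(t:ℂ)) with hA
  set F : ℤ → ℂ := fun m => A m * (if n ∣ m then (n:ℂ) else 0) with hF
  -- per-m root of unity filter
  have filter_eq : ∀ m : ℤ, (∑ ℓ ∈ Finset.range n.toNat, B ℓ m) = F m := by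
    intro m
    set ω : ℂ := Complex.exp (2*Real.pi*Complex.I*(m:ℂ)/(n:ℂ)) with hω
    have hsplit : ∀ ℓ : ℕ, B ℓ m = A m * ω ^ ℓ := by
      intro ℓ
      rw [hB, hA, hω]
      simp only []
      have hexp : Complex.exp (2*Complex.I*(m:ℂ)*(((t + π * ℓ / n : ℝ)):ℂ)) =
          Complex.exp (2*Complex.I*(m:ℂ)*(t:ℂ)) *
            Complex.exp ((ℓ:ℂ) * (2*Real.pi*Complex.I*(m:ℂ)/(n:ℂ))) := by
        rw [← Complex.exp_add]
        congr 1
        push_cast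
        field_simp
      rw [hexp, Complex.exp_nat_mul]
      ring
    rw [Finset.sum_congr rfl fun ℓ _ => hsplit ℓ, ← Finset.mul_sum, hF]
    congr 1
    by_cases hd : n ∣ m
    · obtain ⟨c, hc⟩ := hd
      have hω1 : ω = 1 := by
        rw [hω, hc, show (2*Real.pi*Complex.I*((n*c:ℤ):ℂ)/(n:ℂ)) = (c:ℤ) * (2*Real.pi*Complex.I)
          from by push_cast; field_simp]
        exact Complex.exp_int_mul_two_pi_mul_I c
      simp only [hω1, one_pow, Finset.sum_const, Finset.card_range, nsmul_eq_mul, mul_one]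
      rw [if_pos ⟨c, hc⟩]
      norm_cast
      omega
    · have hω1 : ω ≠ 1 := by
        intro hcon
        obtain ⟨k, hk⟩ := Complex.exp_eq_one_iff.mp (hω ▸ hcon)
        apply hd
        have h2πI : (2:ℂ)*Real.pi*Complex.I ≠ 0 :=
          mul_ne_zero (mul_ne_zero two_ne_zero
            (Complex.ofReal_ne_zero.mpr Real.pi_ne_zero)) Complex.I_ne_zero
        have hmc : (m:ℂ) = (k:ℂ) * (n:ℂ) := by
          field_simp at hk
          apply mul_left_cancel₀ h2πI
          linear_combination (2*Real.pi*Complex.I) * hk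
        have hm : m = k * n := by exact_mod_cast hmc
        exact ⟨k, by rw [hm, mul_comm]⟩
      rw [geom_sum_eq hω1]
      have hpow : ω ^ n.toNat = 1 := by
        rw [hω, ← Complex.exp_nat_mul]
        rw [show (n.toNat:ℂ) * (2*Real.pi*Complex.I*(m:ℂ)/(n:ℂ)) = (m:ℤ) * (2*Real.pi*Complex.I)
          from by
            have : ((n.toNat:ℤ):ℂ) = (n:ℂ) := by norm_cast; omega
            push_cast at this ⊢
            field_simp [this]
            rw [this]
            ring]
        exact Complex.exp_int_mul_two_pi_mul_I m
      rw [hpow, sub_self, zero_div, if_neg hd]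
  -- summability of each B ℓ
  have hBsum : ∀ ℓ : ℕ, Summable (B ℓ) := fun ℓ => summable_B p q z _
  -- main chain
  symm
  calc (1 / (n:ℂ)) * ∑ ℓ ∈ Finset.range n.toNat,
        Complex.exp (-Complex.I * ((p:ℂ) - (q:ℂ)) * ((t + π * ℓ / n : ℝ) : ℂ)) *
          besselJ (p + q) ((2 * z * Real.cos (t + π * ℓ / n) : ℝ) : ℂ)
      = (1 / (n:ℂ)) * ∑ ℓ ∈ Finset.range n.toNat, ∑' m : ℤ, B ℓ m := by
        congr 1
        refine Finset.sum_congr rfl fun ℓ _ => ?_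
        rw [← core p q z (t + π * ℓ / n)]
    _ = (1 / (n:ℂ)) * ∑' m : ℤ, ∑ ℓ ∈ Finset.range n.toNat, B ℓ m := by
        congr 1
        exact (hasSum_sum fun ℓ _ => (hBsum ℓ).hasSum).tsum_eq.symm
    _ = (1 / (n:ℂ)) * ∑' m : ℤ, F m := by
        congr 1
        exact tsum_congr filter_eq
    _ = (1 / (n:ℂ)) * ((∑' k : ℤ, A (k * n)) * (n:ℂ)) := by
        congr 1
        have hinj : Function.Injective (fun k : ℤ => k * n) := fun a b hab => by
          exact mul_right_cancel₀ hnne hab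
        have hsupp : Function.support F ⊆ Set.range (fun k : ℤ => k * n) := by
          intro m hm
          rw [Function.mem_support] at hm
          by_cases hd : n ∣ m
          · obtain ⟨c, hc⟩ := hd
            exact ⟨c, by simp [hc, mul_comm]⟩
          · exact absurd (by rw [hF]; simp [hd]) hm
        have heq := hinj.tsum_eq hsupp
        rw [← heq]
        rw [← tsum_mul_right]
        refine tsum_congr fun k => ?_
        rw [hF]
        simp only []
        rw [if_pos (dvd_mul_left n k), mul_comm (A (k*n)) (n:ℂ)]
    _ = ∑' k : ℤ, A (k * n) := by
        field_simp
    _ = ∑' k : ℤ, besselJ (p + k * n) z * besselJ (q - k * n) z *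
        Complex.exp (2 * Complex.I * (k:ℂ) * (n:ℂ) * (t:ℂ)) := by
        refine tsum_congr fun k => ?_
        rw [hA]
        simp only []
        rw [show (2*Complex.I*(((k*n:ℤ)):ℂ)*(t:ℂ)) =
          2 * Complex.I * (k:ℂ) * (n:ℂ) * (t:ℂ) from by push_cast; ring]
end

section
/- For all integers p, q and real z: Σ_{k∈ℤ} (-1)^k J_{p+2k}(z)·J_{q−2k}(z) = J_{p+q}(z√2)·cos((p−q)π/4). -/
open scoped Real

section B17helpers
open Complex MeasureTheory intervalIntegral

namespace B17

lemma core (w α : ℝ) (k : ℤ) :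
    (∫ θ in (0:ℝ)..(2 * Real.pi),
      Complex.exp ((w:ℂ) * Complex.sin ((θ:ℂ) + (α:ℂ)) * Complex.I - (k:ℂ) * (θ:ℂ) * Complex.I))
    = Complex.exp ((k:ℂ) * (α:ℂ) * Complex.I) *
      ∫ θ in (0:ℝ)..(2 * Real.pi),
        Complex.exp ((w:ℂ) * Complex.sin (θ:ℂ) * Complex.I - (k:ℂ) * (θ:ℂ) * Complex.I) := by
  set g : ℝ → ℂ := fun u =>
    Complex.exp ((w:ℂ) * Complex.sin (u:ℂ) * Complex.I - (k:ℂ) * (u:ℂ) * Complex.I) with hg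
  have hper : Function.Periodic g (2 * Real.pi) := by
    intro u
    have h1 : ((w:ℂ) * Complex.sin ((↑(u + 2*Real.pi)):ℂ) * Complex.I
        - (k:ℂ) * ((↑(u + 2*Real.pi)):ℂ) * Complex.I)
        = ((w:ℂ) * Complex.sin (u:ℂ) * Complex.I - (k:ℂ)*(u:ℂ)*Complex.I)
          + ((-k : ℤ):ℂ) * (2*(Real.pi:ℂ)*Complex.I) := by
      push_cast
      rw [Complex.sin_add_two_pi]
      ring
    simp only [hg, h1, Complex.exp_add, Complex.exp_int_mul_two_pi_mul_I, mul_one]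
  have hpt : ∀ θ : ℝ,
      Complex.exp ((w:ℂ) * Complex.sin ((θ:ℂ) + (α:ℂ)) * Complex.I - (k:ℂ) * (θ:ℂ) * Complex.I)
      = Complex.exp ((k:ℂ) * (α:ℂ) * Complex.I) * g (θ + α) := by
    intro θ
    simp only [hg, ← Complex.exp_add]
    congr 1
    push_cast
    ring
  calc (∫ θ in (0:ℝ)..(2 * Real.pi),
      Complex.exp ((w:ℂ) * Complex.sin ((θ:ℂ) + (α:ℂ)) * Complex.I - (k:ℂ) * (θ:ℂ) * Complex.I))
      = ∫ θ in (0:ℝ)..(2 * Real.pi), Complex.exp ((k:ℂ) * (α:ℂ) * Complex.I) * g (θ + α) := by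
        refine intervalIntegral.integral_congr fun θ _ => hpt θ
    _ = Complex.exp ((k:ℂ) * (α:ℂ) * Complex.I) * ∫ θ in (0:ℝ)..(2 * Real.pi), g (θ + α) := by
        rw [intervalIntegral.integral_const_mul]
    _ = Complex.exp ((k:ℂ) * (α:ℂ) * Complex.I) * ∫ θ in α..(α + 2 * Real.pi), g θ := by
        rw [intervalIntegral.integral_comp_add_right g α]
        norm_num [add_comm]
    _ = Complex.exp ((k:ℂ) * (α:ℂ) * Complex.I) *
        ∫ θ in (0:ℝ)..(2 * Real.pi), g θ := by
        rw [hper.intervalIntegral_add_eq α 0, zero_add]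



local instance : Fact (0 < 2 * Real.pi) := ⟨by positivity⟩

lemma fourierCoeff_congr_ae {f g : AddCircle (2 * Real.pi) → ℂ}
    (h : f =ᵐ[AddCircle.haarAddCircle] g) (n : ℤ) : fourierCoeff f n = fourierCoeff g n := by
  unfold fourierCoeff
  exact integral_congr_ae (h.mono fun x hx => by dsimp only; rw [hx])

lemma coeff_eq (f : ℝ → ℂ) (m : ℤ) :
    fourierCoeff (AddCircle.liftIco (2 * Real.pi) 0 f) m
      = (1 / (2 * (Real.pi:ℂ))) *
        ∫ θ in (0:ℝ)..(2 * Real.pi), Complex.exp (-((m:ℂ) * θ * Complex.I)) * f θ := by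
  rw [fourierCoeff_eq_intervalIntegral _ m 0]
  have h1 : ∀ θ : ℝ, (fourier (-m) (θ : AddCircle (2 * Real.pi)) : ℂ)
      = Complex.exp (-((m:ℂ) * θ * Complex.I)) := by
    intro θ
    rw [fourier_coe_apply]
    congr 1
    have h2 : ((2 * Real.pi : ℝ) : ℂ) ≠ 0 := by
      push_cast
      simp [Real.pi_ne_zero]
    rw [div_eq_iff h2]
    push_cast
    ring
  have hae : ∀ᵐ x : ℝ, x ≠ 2 * Real.pi := by
    rw [ae_iff]
    simpa using measure_singleton (2 * Real.pi : ℝ)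
  have h3 : (∫ x in (0:ℝ)..(0 + 2 * Real.pi),
        (fourier (-m) (x : AddCircle (2 * Real.pi)) : ℂ) • AddCircle.liftIco (2 * Real.pi) 0 f x)
      = ∫ θ in (0:ℝ)..(2 * Real.pi), Complex.exp (-((m:ℂ) * θ * Complex.I)) * f θ := by
    rw [zero_add]
    refine intervalIntegral.integral_congr_ae ?_
    filter_upwards [hae] with x hx hmem
    rw [Set.uIoc_of_le Real.two_pi_pos.le] at hmem
    have hxm : x ∈ Set.Ico (0:ℝ) (0 + 2 * Real.pi) := by
      rw [zero_add]
      exact ⟨hmem.1.le, lt_of_le_of_ne hmem.2 hx⟩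
    rw [AddCircle.liftIco_coe_apply hxm, smul_eq_mul, h1]
  rw [h3, Complex.real_smul]
  push_cast
  ring_nf
  simp only [mul_comm, mul_left_comm, mul_assoc]

lemma parseval (X A : ℝ → ℂ) (hX0 : X 0 = X (0 + 2 * Real.pi)) (hXc : Continuous X)
    (hA0 : A 0 = A (0 + 2 * Real.pi)) (hAc : Continuous A) :
    HasSum (fun m : ℤ =>
        (starRingEnd ℂ) (fourierCoeff (AddCircle.liftIco (2 * Real.pi) 0 X) m) *
          fourierCoeff (AddCircle.liftIco (2 * Real.pi) 0 A) m)
      (fourierCoeff (AddCircle.liftIco (2 * Real.pi) 0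
        (fun θ => (starRingEnd ℂ) (X θ) * A θ)) 0) := by
  set T := 2 * Real.pi
  let cX : C(AddCircle T, ℂ) := ⟨AddCircle.liftIco T 0 X, AddCircle.liftIco_continuous hX0 hXc.continuousOn⟩
  let cA : C(AddCircle T, ℂ) := ⟨AddCircle.liftIco T 0 A, AddCircle.liftIco_continuous hA0 hAc.continuousOn⟩
  let x : Lp ℂ 2 (@AddCircle.haarAddCircle T _) := ContinuousMap.toLp 2 _ ℂ cX
  let a : Lp ℂ 2 (@AddCircle.haarAddCircle T _) := ContinuousMap.toLp 2 _ ℂ cA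
  have key := (@fourierBasis T _).hasSum_inner_mul_inner x a
  have hrep : ∀ (y : Lp ℂ 2 (@AddCircle.haarAddCircle T _)) (i : ℤ),
      (inner ℂ (fourierBasis i) y : ℂ) = fourierCoeff (⇑y) i := by
    intro y i
    rw [← fourierBasis_repr]
    exact (fourierBasis.repr_apply_apply y i).symm
  have hcX : fourierCoeff (⇑x) = fourierCoeff (⇑cX) := by
    funext i
    exact fourierCoeff_congr_ae (ContinuousMap.coeFn_toLp _ _) i
  have hcA : fourierCoeff (⇑a) = fourierCoeff (⇑cA) := by
    funext i
    exact fourierCoeff_congr_ae (ContinuousMap.coeFn_toLp _ _) i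
  have hinner : (inner ℂ x a : ℂ) = fourierCoeff (AddCircle.liftIco T 0
      (fun θ => (starRingEnd ℂ) (X θ) * A θ)) 0 := by
    rw [ContinuousMap.inner_toLp]
    unfold fourierCoeff
    simp only [neg_zero, fourier_zero, one_smul]
    simp only [mul_comm (cA _)]
    rfl
  have heq : ∀ m : ℤ, (inner ℂ x (fourierBasis m) : ℂ) * inner ℂ (fourierBasis m) a
      = (starRingEnd ℂ) (fourierCoeff (AddCircle.liftIco T 0 X) m) *
          fourierCoeff (AddCircle.liftIco T 0 A) m := by
    intro m
    rw [← inner_conj_symm, hrep, hrep, hcX, hcA]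
    rfl
  rw [hinner] at key
  exact key.congr_fun fun m => (heq m).symm


lemma conj_intervalIntegral (f : ℝ → ℂ) (a b : ℝ) :
    (starRingEnd ℂ) (∫ x in a..b, f x) = ∫ x in a..b, (starRingEnd ℂ) (f x) := by
  simp only [intervalIntegral]
  rw [map_sub, ← integral_conj, ← integral_conj]

lemma trig1 {ε : ℝ} (hε : ε = 1 ∨ ε = -1) (z θ : ℝ) :
    z * Real.sin (θ + ε * (Real.pi / 2)) = ε * z * Real.cos θ := by
  rcases hε with rfl | rfl
  · rw [one_mul, Real.sin_add_pi_div_two]; ring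
  · rw [show θ + (-1 : ℝ) * (Real.pi / 2) = θ - Real.pi / 2 by ring, Real.sin_sub_pi_div_two]; ring

lemma trig2 {ε : ℝ} (hε : ε = 1 ∨ ε = -1) (z θ : ℝ) :
    z * Real.sqrt 2 * Real.sin (θ + ε * (Real.pi / 4)) = z * Real.sin θ + ε * z * Real.cos θ := by
  have h2 : Real.sqrt 2 * Real.sqrt 2 = 2 := Real.mul_self_sqrt (by norm_num)
  rcases hε with rfl | rfl
  · rw [one_mul, Real.sin_add, Real.cos_pi_div_four, Real.sin_pi_div_four]
    linear_combination (z * (Real.sin θ + Real.cos θ) / 2) * h2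
  · rw [show θ + (-1 : ℝ) * (Real.pi / 4) = θ - Real.pi / 4 by ring, Real.sin_sub,
      Real.cos_pi_div_four, Real.sin_pi_div_four]
    linear_combination (z * (Real.sin θ - Real.cos θ) / 2) * h2

lemma hasSumAux (z : ℝ) (n : ℤ) (ε : ℝ) (hε : ε = 1 ∨ ε = -1) :
    HasSum (fun m : ℤ =>
        Complex.exp (((n - m : ℤ) : ℂ) * ((ε * (Real.pi / 2) : ℝ) : ℂ) * Complex.I) *
          besselJ (n - m) (z : ℂ) * besselJ m (z : ℂ))
      (Complex.exp ((n : ℂ) * ((ε * (Real.pi / 4) : ℝ) : ℂ) * Complex.I) *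
        besselJ n ((z * Real.sqrt 2 : ℝ) : ℂ)) := by
  set A : ℝ → ℂ := fun θ => Complex.exp (((z * Real.sin θ : ℝ) : ℂ) * Complex.I) with hA
  set X : ℝ → ℂ := fun θ =>
    Complex.exp (((-(ε * z) * Real.cos θ + (n : ℝ) * θ : ℝ) : ℂ) * Complex.I) with hX
  have hA0 : A 0 = A (0 + 2 * Real.pi) := by
    simp [hA, Real.sin_two_pi]
  have hX0 : X 0 = X (0 + 2 * Real.pi) := by
    simp only [hX, zero_add]
    rw [Real.cos_two_pi, Real.cos_zero]
    rw [show ((-(ε * z) * 1 + (n : ℝ) * (2 * Real.pi) : ℝ) : ℂ) * Complex.I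
        = ((-(ε * z) * 1 + (n : ℝ) * 0 : ℝ) : ℂ) * Complex.I + (n : ℤ) * (2 * Real.pi * Complex.I) by
      push_cast; ring]
    rw [Complex.exp_add, Complex.exp_int_mul_two_pi_mul_I, mul_one]
    norm_num
  have hAc : Continuous A :=
    Complex.continuous_exp.comp (((Complex.continuous_ofReal.comp
      (continuous_const.mul Real.continuous_sin)).mul continuous_const))
  have hXc : Continuous X := by
    apply Complex.continuous_exp.comp
    apply Continuous.mul _ continuous_const
    apply Complex.continuous_ofReal.comp
    fun_prop
  have hcoA : ∀ m : ℤ, fourierCoeff (AddCircle.liftIco (2 * Real.pi) 0 A) m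
      = besselJ m (z : ℂ) := by
    intro m
    rw [coeff_eq]
    unfold besselJ
    congr 1
    refine intervalIntegral.integral_congr fun θ _ => ?_
    rw [hA, ← Complex.exp_add]
    congr 1
    push_cast
    ring
  have hcoX : ∀ m : ℤ, (starRingEnd ℂ) (fourierCoeff (AddCircle.liftIco (2 * Real.pi) 0 X) m)
      = Complex.exp (((n - m : ℤ) : ℂ) * ((ε * (Real.pi / 2) : ℝ) : ℂ) * Complex.I) *
        besselJ (n - m) (z : ℂ) := by
    intro m
    rw [coeff_eq, map_mul, conj_intervalIntegral]
    have hptwise : ∀ θ : ℝ, (starRingEnd ℂ) (Complex.exp (-((m:ℂ) * θ * Complex.I)) * X θ)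
        = Complex.exp ((z:ℂ) * Complex.sin ((θ:ℂ) + ((ε * (Real.pi / 2) : ℝ) : ℂ)) * Complex.I
            - ((n - m : ℤ):ℂ) * (θ:ℂ) * Complex.I) := by
      intro θ
      rw [hX, map_mul, ← Complex.exp_conj, ← Complex.exp_conj, ← Complex.exp_add]
      congr 1
      have key : (z:ℂ) * Complex.sin ((θ:ℂ) + ((ε * (Real.pi / 2) : ℝ) : ℂ))
          = ((ε * z * Real.cos θ : ℝ) : ℂ) := by
        rw [show (θ:ℂ) + ((ε * (Real.pi / 2) : ℝ) : ℂ) = ((θ + ε * (Real.pi / 2) : ℝ) : ℂ) by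
          push_cast; ring, ← Complex.ofReal_sin, ← Complex.ofReal_mul, trig1 hε z θ]
      rw [key]
      simp only [map_neg, map_mul, Complex.conj_I, Complex.conj_ofReal, map_intCast]
      push_cast
      ring
    rw [intervalIntegral.integral_congr fun θ _ => hptwise θ]
    rw [core z (ε * (Real.pi / 2)) (n - m)]
    rw [show (starRingEnd ℂ) (1 / (2 * (Real.pi:ℂ))) = 1 / (2 * (Real.pi:ℂ)) by
      simp only [map_div₀, map_one, map_mul, Complex.conj_ofReal, map_ofNat]]
    unfold besselJ
    push_cast
    ring
  have hinner : fourierCoeff (AddCircle.liftIco (2 * Real.pi) 0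
        (fun θ => (starRingEnd ℂ) (X θ) * A θ)) 0
      = Complex.exp ((n : ℂ) * ((ε * (Real.pi / 4) : ℝ) : ℂ) * Complex.I) *
        besselJ n ((z * Real.sqrt 2 : ℝ) : ℂ) := by
    rw [coeff_eq]
    have hptwise : ∀ θ : ℝ,
        Complex.exp (-(((0:ℤ):ℂ) * θ * Complex.I)) * ((starRingEnd ℂ) (X θ) * A θ)
        = Complex.exp (((z * Real.sqrt 2 : ℝ):ℂ) * Complex.sin ((θ:ℂ) + ((ε * (Real.pi / 4) : ℝ) : ℂ)) * Complex.I
            - (n:ℂ) * (θ:ℂ) * Complex.I) := by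
      intro θ
      rw [hX, hA, ← Complex.exp_conj, map_mul, ← Complex.exp_add, ← Complex.exp_add]
      congr 1
      have key : ((z * Real.sqrt 2 : ℝ):ℂ) * Complex.sin ((θ:ℂ) + ((ε * (Real.pi / 4) : ℝ) : ℂ))
          = ((z * Real.sin θ + ε * z * Real.cos θ : ℝ) : ℂ) := by
        rw [show (θ:ℂ) + ((ε * (Real.pi / 4) : ℝ) : ℂ) = ((θ + ε * (Real.pi / 4) : ℝ) : ℂ) by
          push_cast; ring, ← Complex.ofReal_sin, ← Complex.ofReal_mul, trig2 hε z θ]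
      rw [key]
      simp only [map_add, map_neg, map_mul, Complex.conj_I, Complex.conj_ofReal, map_intCast]
      push_cast
      ring
    rw [intervalIntegral.integral_congr fun θ _ => hptwise θ]
    rw [core (z * Real.sqrt 2) (ε * (Real.pi / 4)) n]
    unfold besselJ
    push_cast
    ring
  have hp := parseval X A hX0 hXc hA0 hAc
  rw [hinner] at hp
  refine hp.congr_fun fun m => ?_
  rw [hcoX m, hcoA m, mul_assoc]


lemma expsum (r : ℝ) :
    Complex.exp ((r:ℂ) * Complex.I) + Complex.exp (-((r:ℂ) * Complex.I)) =
      2 * ((Real.cos r : ℝ) : ℂ) := by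
  rw [Complex.ofReal_cos]
  unfold Complex.cos
  rw [neg_mul]
  ring

end B17

end B17helpers

theorem statement17 (p q : ℤ) (z : ℝ) :
    (∑' k : ℤ, (-1 : ℂ) ^ k * besselJ (p + 2 * k) z * besselJ (q - 2 * k) z) =
      besselJ (p + q) ((z * Real.sqrt 2 : ℝ) : ℂ) * (Real.cos ((p - q) * π / 4) : ℂ) := by

  have H1 := B17.hasSumAux z (p + q) 1 (Or.inl rfl)
  have H2 := B17.hasSumAux z (p + q) (-1) (Or.inr rfl)
  set c1 : ℂ := Complex.exp (-(p:ℂ) * ((Real.pi/2 : ℝ):ℂ) * Complex.I) with hc1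
  set c2 : ℂ := Complex.exp ((p:ℂ) * ((Real.pi/2 : ℝ):ℂ) * Complex.I) with hc2
  have Hsum := ((H1.mul_left c1).add (H2.mul_left c2)).div_const 2
  -- clean up the summand
  have Hc : HasSum (fun m : ℤ =>
      ((Real.cos (((q:ℝ) - m) * (Real.pi/2)) : ℝ) : ℂ) *
        (besselJ (p + q - m) (z:ℂ) * besselJ m (z:ℂ)))
      (((Real.cos (((q:ℝ) - p) * (Real.pi/4)) : ℝ) : ℂ) *
        besselJ (p + q) ((z * Real.sqrt 2 : ℝ) : ℂ)) := by
    have hS : ((Real.cos (((q:ℝ) - p) * (Real.pi/4)) : ℝ) : ℂ) *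
        besselJ (p + q) ((z * Real.sqrt 2 : ℝ) : ℂ)
        = (c1 * (Complex.exp (((p + q : ℤ) : ℂ) * (((1:ℝ) * (Real.pi / 4) : ℝ) : ℂ) * Complex.I) *
              besselJ (p + q) ((z * Real.sqrt 2 : ℝ) : ℂ))
          + c2 * (Complex.exp (((p + q : ℤ) : ℂ) * (((-1:ℝ) * (Real.pi / 4) : ℝ) : ℂ) * Complex.I) *
              besselJ (p + q) ((z * Real.sqrt 2 : ℝ) : ℂ))) / 2 := by
      have hs := B17.expsum (((q:ℝ) - p) * (Real.pi/4))
      have e1 : c1 * Complex.exp (((p + q : ℤ) : ℂ) * (((1:ℝ) * (Real.pi / 4) : ℝ) : ℂ) * Complex.I)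
          = Complex.exp (((((q:ℝ) - p) * (Real.pi/4) : ℝ) : ℂ) * Complex.I) := by
        rw [hc1, ← Complex.exp_add]; congr 1; push_cast; ring
      have e2 : c2 * Complex.exp (((p + q : ℤ) : ℂ) * (((-1:ℝ) * (Real.pi / 4) : ℝ) : ℂ) * Complex.I)
          = Complex.exp (-(((((q:ℝ) - p) * (Real.pi/4) : ℝ) : ℂ) * Complex.I)) := by
        rw [hc2, ← Complex.exp_add]; congr 1; push_cast; ring
      set J := besselJ (p + q) ((z * Real.sqrt 2 : ℝ) : ℂ)
      linear_combination (-(J)/2) * e1 + (-(J)/2) * e2 + (-(J)/2) * hs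
    rw [hS]
    refine Hsum.congr_fun fun m => ?_
    have hs := B17.expsum (((q:ℝ) - m) * (Real.pi/2))
    have e1 : c1 * Complex.exp (((p + q - m : ℤ) : ℂ) * (((1:ℝ) * (Real.pi / 2) : ℝ) : ℂ) * Complex.I)
        = Complex.exp (((((q:ℝ) - m) * (Real.pi/2) : ℝ) : ℂ) * Complex.I) := by
      rw [hc1, ← Complex.exp_add]; congr 1; push_cast; ring
    have e2 : c2 * Complex.exp (((p + q - m : ℤ) : ℂ) * (((-1:ℝ) * (Real.pi / 2) : ℝ) : ℂ) * Complex.I)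
        = Complex.exp (-(((((q:ℝ) - m) * (Real.pi/2) : ℝ) : ℂ) * Complex.I)) := by
      rw [hc2, ← Complex.exp_add]; congr 1; push_cast; ring
    set J1 := besselJ (p + q - m) (z:ℂ)
    set J2 := besselJ m (z:ℂ)
    linear_combination (-(J1*J2)/2) * e1 + (-(J1*J2)/2) * e2 + (-(J1*J2)/2) * hs
  -- restrict to the even sublattice
  have hinj : Function.Injective (fun k : ℤ => q - 2 * k) := by
    intro a b hab
    have h : q - 2 * a = q - 2 * b := hab
    omega
  have hvan : ∀ m : ℤ, m ∉ Set.range (fun k : ℤ => q - 2 * k) →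
      ((Real.cos (((q:ℝ) - m) * (Real.pi/2)) : ℝ) : ℂ) *
        (besselJ (p + q - m) (z:ℂ) * besselJ m (z:ℂ)) = 0 := by
    intro m hm
    have hodd : ∃ j : ℤ, q - m = 2 * j + 1 := by
      rcases Int.even_or_odd (q - m) with ⟨j, hj⟩ | ⟨j, hj⟩
      · exact absurd (Set.mem_range.mpr ⟨j, show q - 2 * j = m by omega⟩) hm
      · exact ⟨j, hj⟩
    obtain ⟨j, hj⟩ := hodd
    have hcast : (q:ℝ) - m = 2 * j + 1 := by exact_mod_cast congrArg (Int.cast : ℤ → ℝ) hj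
    have : Real.cos (((q:ℝ) - m) * (Real.pi/2)) = 0 := by
      rw [hcast]
      exact Real.cos_eq_zero_iff.mpr ⟨j, by ring⟩
    rw [this]
    simp
  have Hfinal := (hinj.hasSum_iff hvan).mpr Hc
  have hfun : (fun k : ℤ => (-1 : ℂ) ^ k * besselJ (p + 2 * k) z * besselJ (q - 2 * k) z)
      = (fun m : ℤ => ((Real.cos (((q:ℝ) - m) * (Real.pi/2)) : ℝ) : ℂ) *
          (besselJ (p + q - m) (z:ℂ) * besselJ m (z:ℂ))) ∘ (fun k : ℤ => q - 2 * k) := by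
    funext k
    simp only [Function.comp_apply]
    have hidx : p + q - (q - 2 * k) = p + 2 * k := by ring
    rw [hidx]
    have hcast : (q:ℝ) - (q - 2 * k : ℤ) = 2 * k := by push_cast; ring
    rw [hcast]
    have hcos : Real.cos ((2 * (k:ℝ)) * (Real.pi/2)) = (-1 : ℝ) ^ k := by
      have h0 := Real.cos_int_mul_pi_sub 0 k
      rw [sub_zero, Real.cos_zero, mul_one] at h0
      rw [show (2 * (k:ℝ)) * (Real.pi/2) = (k:ℝ) * Real.pi by ring]
      exact h0
    rw [hcos]
    push_cast
    ring
  rw [hfun]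
  rw [Hfinal.tsum_eq]
  rw [show ((q:ℝ) - p) * (Real.pi/4) = -(((p:ℝ) - q) * Real.pi / 4) by ring, Real.cos_neg]
  ring
end
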